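/- arXiv:0803.3098 — 7 statements merged into one kernel-verified Lean document; each statement's English description precedes it below -/
import Mathlib

section
/- For all real numbers 0 < α < 1 and θ > 0, and all integers n ≥ 1 and 1 ≤ m ≤ n+1, the decrement matrix satisfies the recursion q_{α,θ}(n+1, m) = q_{α,θ}(n, m−1)·(m−1−α)/(n+θ) + q_{α,θ}(n, m)·(n+θ−m)/(n+θ) + (α/(n+θ))·1_{{m=1}}, where by convention q_{α,θ}(n, m) = 0 whenever m ≤ 0 or m > n. -/
/-- Rising factorial `[x]_j = x (x+1) ⋯ (x+j-1)`, with `[x]_0 = 1`. -/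
noncomputable def risingFactorial (x : ℝ) : ℕ → ℝ
  | 0 => 1
  | n + 1 => risingFactorial x n * (x + n)

/-- The decrement matrix
`q_{α,θ}(n, m) = C(n,m) · ((n−m)α + mθ)/n · [1−α]_{m−1} / [n−m+θ]_m` for `1 ≤ m ≤ n`,
and `q_{α,θ}(n, m) = 0` otherwise. -/
noncomputable def decrementMatrix (α θ : ℝ) (n m : ℕ) : ℝ :=
  if 1 ≤ m ∧ m ≤ n then
    (n.choose m : ℝ) * ((((n : ℝ) - m) * α + m * θ) / n) *
      risingFactorial (1 - α) (m - 1) / risingFactorial ((n : ℝ) - m + θ) m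
  else 0

private lemma rf_succ' (x : ℝ) (n : ℕ) :
    risingFactorial x (n + 1) = risingFactorial x n * (x + n) := rfl

private lemma rf_pos' (x : ℝ) (hx : 0 < x) : ∀ n, 0 < risingFactorial x n
  | 0 => one_pos
  | n + 1 => mul_pos (rf_pos' x hx n) (by positivity)

private lemma rf_shift' (x : ℝ) : ∀ n, risingFactorial x (n + 1) = x * risingFactorial (x + 1) n
  | 0 => by simp [risingFactorial]
  | n + 1 => by
      rw [rf_succ', rf_shift' x n, rf_succ']
      push_cast
      ring

/-- the recursion satisfied by the decrement matrix. -/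
theorem decrementMatrix_recursion (α θ : ℝ) (hα0 : 0 < α) (hα1 : α < 1) (hθ : 0 < θ)
    (n m : ℕ) (hn : 1 ≤ n) (hm1 : 1 ≤ m) (hm2 : m ≤ n + 1) :
    decrementMatrix α θ (n + 1) m
      = decrementMatrix α θ n (m - 1) * (((m : ℝ) - 1 - α) / ((n : ℝ) + θ))
        + decrementMatrix α θ n m * (((n : ℝ) + θ - m) / ((n : ℝ) + θ))
        + (α / ((n : ℝ) + θ)) * (if m = 1 then 1 else 0) := by
  rcases eq_or_ne m 1 with rfl | hm
  · -- Case m = 1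
    have hnθ : (0:ℝ) < (n:ℝ) + θ := by positivity
    have hn0 : (0:ℝ) < (n:ℝ) := by exact_mod_cast hn
    simp only [decrementMatrix, if_pos (⟨le_refl 1, by omega⟩ : 1 ≤ 1 ∧ 1 ≤ n + 1),
      if_pos (⟨le_refl 1, hn⟩ : 1 ≤ 1 ∧ 1 ≤ n)]
    norm_num [risingFactorial]
    have h1 : (n:ℝ) - 1 + θ ≠ 0 := by
      have : (1:ℝ) ≤ (n:ℝ) := by exact_mod_cast hn
      nlinarith
    field_simp
    ring
  · rcases eq_or_ne m (n + 1) with hmn | hmn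
    · -- Case m = n + 1
      obtain ⟨p, rfl⟩ : ∃ p, n = p + 1 := ⟨n - 1, by omega⟩
      subst hmn
      simp only [if_neg (by omega : ¬ p + 1 + 1 = 1), mul_zero, add_zero]
      have hQ : 0 < risingFactorial θ (p + 1) := rf_pos' _ hθ _
      set Q := risingFactorial θ (p + 1) with hQdef
      set S := risingFactorial (1 - α) p with hSdef
      have L : decrementMatrix α θ (p + 1 + 1) (p + 1 + 1)
          = (((p:ℝ)+2) * θ / ((p:ℝ)+2)) * (S * (1 - α + p)) / (Q * (θ + (p + 1))) := by
        rw [decrementMatrix, if_pos (by omega : 1 ≤ p+1+1 ∧ p+1+1 ≤ p+1+1)]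
        have h1 : p + 1 + 1 - 1 = p + 1 := rfl
        rw [h1]
        have hb1 : ((p+1+1:ℕ):ℝ) - ((p+1+1:ℕ):ℝ) + θ = θ := by push_cast; ring
        rw [hb1, rf_succ', rf_succ']
        push_cast
        simp [Nat.choose_self]
        ring
      have T1 : decrementMatrix α θ (p + 1) (p + 1 + 1 - 1)
          = (((p:ℝ)+1) * θ / ((p:ℝ)+1)) * S / Q := by
        have h1 : p + 1 + 1 - 1 = p + 1 := rfl
        rw [h1, decrementMatrix, if_pos (by omega : 1 ≤ p+1 ∧ p+1 ≤ p+1)]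
        have h2 : p + 1 - 1 = p := rfl
        rw [h2]
        have hb1 : ((p+1:ℕ):ℝ) - ((p+1:ℕ):ℝ) + θ = θ := by push_cast; ring
        rw [hb1]
        push_cast
        simp [Nat.choose_self]
        rfl
      have Z : decrementMatrix α θ (p + 1) (p + 1 + 1) = 0 := by
        rw [decrementMatrix, if_neg (by omega)]
      rw [L, T1, Z]
      have h4 : ((p:ℝ)+1) ≠ 0 := by positivity
      have h5 : ((p:ℝ)+2) ≠ 0 := by positivity
      have h6 : (Q:ℝ) ≠ 0 := ne_of_gt hQ
      have h7 : ((p:ℝ)+1+θ) ≠ 0 := by positivity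
      have h8 : θ + ((p:ℝ)+1) ≠ 0 := by positivity
      push_cast
      field_simp
      ring
    · -- Case 2 ≤ m ≤ n
      have hle : m ≤ n := by omega
      obtain ⟨j, rfl⟩ : ∃ j, m = j + 2 := ⟨m - 2, by omega⟩
      obtain ⟨k, rfl⟩ : ∃ k, n = j + 2 + k := ⟨n - (j + 2), by omega⟩
      simp only [if_neg (by omega : ¬ j + 2 = 1), mul_zero, add_zero]
      have hP : 0 < risingFactorial ((k:ℝ) + 1 + θ) (j+1) := rf_pos' _ (by positivity) _
      set P := risingFactorial ((k:ℝ) + 1 + θ) (j+1) with hPdef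
      set R := risingFactorial (1 - α) j with hRdef
      set a := (((j+2+k).choose (j+1) : ℕ) : ℝ) with hadef
      set b := (((j+2+k).choose (j+2) : ℕ) : ℝ) with hbdef
      set c := (((j+2+k+1).choose (j+2) : ℕ) : ℝ) with hcdef
      have L : decrementMatrix α θ (j + 2 + k + 1) (j + 2)
          = c * ((((k:ℝ)+1)*α + ((j:ℝ)+2)*θ)/((j:ℝ)+k+3)) * (R*((j:ℝ)+1-α)) / (P * ((j:ℝ)+k+2+θ)) := by
        rw [decrementMatrix, if_pos (by omega : 1 ≤ j+2 ∧ j+2 ≤ j+2+k+1)]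
        have h1 : j + 2 - 1 = j + 1 := rfl
        rw [h1]
        have hb1 : ((j+2+k+1:ℕ):ℝ) - ((j+2:ℕ):ℝ) + θ = (k:ℝ)+1+θ := by push_cast; ring
        rw [hb1, rf_succ', rf_succ']
        push_cast; ring
      have T1 : decrementMatrix α θ (j + 2 + k) (j + 2 - 1)
          = a * ((((k:ℝ)+1)*α + ((j:ℝ)+1)*θ)/((j:ℝ)+k+2)) * R / P := by
        have h1 : j + 2 - 1 = j + 1 := rfl
        rw [h1, decrementMatrix, if_pos (by omega : 1 ≤ j+1 ∧ j+1 ≤ j+2+k)]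
        have h2 : j + 1 - 1 = j := rfl
        rw [h2]
        have hb1 : ((j+2+k:ℕ):ℝ) - ((j+1:ℕ):ℝ) + θ = (k:ℝ)+1+θ := by push_cast; ring
        rw [hb1]
        push_cast; ring
      have T2 : decrementMatrix α θ (j + 2 + k) (j + 2)
          = b * (((k:ℝ)*α + ((j:ℝ)+2)*θ)/((j:ℝ)+k+2)) * (R*((j:ℝ)+1-α)) / (((k:ℝ)+θ) * P) := by
        rw [decrementMatrix, if_pos (by omega : 1 ≤ j+2 ∧ j+2 ≤ j+2+k)]
        have h1 : j + 2 - 1 = j + 1 := rfl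
        rw [h1]
        have hb1 : ((j+2+k:ℕ):ℝ) - ((j+2:ℕ):ℝ) + θ = (k:ℝ)+θ := by push_cast; ring
        rw [hb1, rf_succ' (1-α) j, rf_shift' ((k:ℝ)+θ) (j+1),
          show (k:ℝ)+θ+1 = (k:ℝ)+1+θ by ring]
        push_cast; ring
      have hpascal : c = a + b := by
        have hp : (j+2+k+1).choose (j+2) = (j+2+k).choose (j+1) + (j+2+k).choose (j+2) := by
          rw [show j+2 = j+1+1 from rfl, Nat.choose_succ_succ]
        rw [hadef, hbdef, hcdef]
        exact_mod_cast congrArg (Nat.cast : ℕ → ℝ) hp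
      have ha : ((j:ℝ)+k+3) * a = c * ((j:ℝ)+2) := by
        have := Nat.add_one_mul_choose_eq (j+2+k) (j+1)
        have h2 : ((j+2+k+1) * (j+2+k).choose (j+1) : ℕ) = ((j+2+k+1).choose (j+2) * (j+2) : ℕ) := by
          simpa using this
        have ha' : ((j+2+k+1:ℕ):ℝ) * a = c * ((j+2:ℕ):ℝ) := by
          rw [hadef, hcdef]; exact_mod_cast h2
        push_cast at ha'
        linarith [ha']
      have hb : ((j:ℝ)+k+3) * b = c * ((k:ℝ)+1) := by
        linear_combination (-((j:ℝ)+k+3))*hpascal - ha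
      have h3 : ((j:ℝ)+k+3) ≠ 0 := by positivity
      have ea : a = c * ((j:ℝ)+2) / ((j:ℝ)+k+3) := by field_simp; linarith [ha]
      have eb : b = c * ((k:ℝ)+1) / ((j:ℝ)+k+3) := by field_simp; linarith [hb]
      rw [L, T1, T2, ea, eb]
      have h4 : ((j:ℝ)+k+2) ≠ 0 := by positivity
      have h5 : ((k:ℝ)+θ) ≠ 0 := by positivity
      have h6 : ((j:ℝ)+k+2+θ) ≠ 0 := by positivity
      have h7 : (P:ℝ) ≠ 0 := ne_of_gt hP
      push_cast
      field_simp
      ring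
end

section
/- For all real numbers 0 < α < 1 and θ > 0, and every integer n ≥ 1, the decrement matrix is a probability distribution on {1,…,n}: ∑_{m=1}^{n} q_{α,θ}(n, m) = 1. -/
lemma risingFactorial_pos {x : ℝ} (hx : 0 < x) : ∀ j : ℕ, 0 < risingFactorial x j
  | 0 => by simp [risingFactorial]
  | j + 1 => by
      have := risingFactorial_pos hx j
      have h2 : (0:ℝ) < x + j := by positivity
      simpa [risingFactorial] using mul_pos this h2

lemma risingFactorial_add (x : ℝ) (a : ℕ) : ∀ b : ℕ,
    risingFactorial x (a + b) = risingFactorial x a * risingFactorial (x + a) b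
  | 0 => by simp [risingFactorial]
  | b + 1 => by
      have := risingFactorial_add x a b
      show risingFactorial x (a + b + 1) = _
      rw [risingFactorial, this, risingFactorial]
      push_cast
      ring

/-- the decrement matrix is a probability distribution on `{1, …, n}`. -/
theorem decrementMatrix_sum_eq_one (α θ : ℝ) (hα0 : 0 < α) (hα1 : α < 1) (hθ : 0 < θ)
    (n : ℕ) (hn : 1 ≤ n) :
    ∑ m ∈ Finset.Icc 1 n, decrementMatrix α θ n m = 1 := by
  have h1α : (0:ℝ) < 1 - α := by linarith
  set B : ℕ → ℝ := fun k =>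
    ((n-1).choose k : ℝ) * risingFactorial (1-α) k * risingFactorial θ (n-k) with hB
  have hrfn : 0 < risingFactorial θ n := risingFactorial_pos hθ n
  have key : ∀ m ∈ Finset.Icc 1 n,
      decrementMatrix α θ n m = (B (m-1) - B m) / risingFactorial θ n := by
    intro m hm
    rw [Finset.mem_Icc] at hm
    obtain ⟨hm1, hmn⟩ := hm
    obtain ⟨k, rfl⟩ : ∃ k, m = k + 1 := ⟨m - 1, (Nat.succ_pred_eq_of_pos hm1).symm⟩
    set a := n - (k+1) with ha
    have hna : n = a + (k+1) := (Nat.sub_add_cancel hmn).symm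
    have hnk : n - k = a + 1 := by omega
    have hcast : ((n:ℝ) - (k+1)) = (a:ℝ) := by
      rw [ha]; push_cast [Nat.cast_sub hmn]; ring
    -- choose identities
    have hne : n - 1 + 1 = n := by omega
    have hc1 : (n:ℝ) * ((n-1).choose k) = (n.choose (k+1)) * (k+1) := by
      have h := Nat.add_one_mul_choose_eq (n-1) k
      simp only [Nat.succ_eq_add_one, hne] at h
      exact_mod_cast congrArg (Nat.cast : ℕ → ℝ) h
    have hc2 : (n:ℝ) * ((n-1).choose (k+1)) = (n.choose (k+1)) * a := by
      have h := Nat.add_one_mul_choose_eq (n-1) (k+1)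
      simp only [Nat.succ_eq_add_one, hne] at h
      have h2 := Nat.choose_succ_right_eq n (k+1)
      rw [h2] at h
      exact_mod_cast congrArg (Nat.cast : ℕ → ℝ) h
    have hn0 : (n:ℝ) ≠ 0 := by positivity
    have hθa : (0:ℝ) < θ + a := by positivity
    have hrfa : 0 < risingFactorial θ a := risingFactorial_pos hθ a
    have hrfd : 0 < risingFactorial (θ + a) (k+1) := risingFactorial_pos hθa (k+1)
    -- decompose [θ]_n
    have hsplit : risingFactorial θ n = risingFactorial θ a * risingFactorial (θ + a) (k+1) := by
      have h := risingFactorial_add θ a (k+1)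
      rw [← hna] at h
      exact h
    have hden : risingFactorial ((n:ℝ) - (k+1) + θ) (k+1) = risingFactorial (θ + a) (k+1) := by
      rw [hcast, add_comm]
    have hrfk1 : risingFactorial (1-α) (k+1) = risingFactorial (1-α) k * (1 - α + k) := rfl
    have hrfa1 : risingFactorial θ (a+1) = risingFactorial θ a * (θ + a) := rfl
    -- unfold
    have hcond : 1 ≤ k + 1 ∧ k + 1 ≤ n := ⟨Nat.le_add_left 1 k, hmn⟩
    rw [decrementMatrix, if_pos hcond]
    simp only [hB, Nat.add_sub_cancel, hnk, hrfa1, hrfk1, hden]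
    rw [hsplit]
    have hCk : ((n-1).choose k : ℝ) = (n.choose (k+1)) * (k+1) / n := by
      field_simp; linarith [hc1]
    have hCk1 : ((n-1).choose (k+1) : ℝ) = (n.choose (k+1)) * a / n := by
      field_simp; linarith [hc2]
    rw [hCk, hCk1]
    simp only [← ha]
    push_cast [hcast]
    have hrfd' : risingFactorial ((a:ℝ) + θ) (k+1) ≠ 0 := by
      rw [add_comm (a:ℝ) θ]; exact ne_of_gt hrfd
    field_simp [hrfd', ne_of_gt hrfd, ne_of_gt hrfa]
    ring_nf
  rw [Finset.sum_congr rfl key, ← Finset.sum_div]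
  have htel : ∑ m ∈ Finset.Icc 1 n, (B (m-1) - B m) = B 0 - B n := by
    rw [← Finset.Ico_add_one_right_eq_Icc, Finset.sum_Ico_eq_sum_range]
    simp only [Nat.add_sub_cancel, Nat.succ_sub_one]
    have : ∀ i ∈ Finset.range n, B (1 + i - 1) - B (1 + i) = B i - B (i+1) := by
      intro i _; congr 1 <;> congr 1 <;> omega
    rw [Finset.sum_congr rfl this, Finset.sum_range_sub' B]
  rw [htel]
  have hB0 : B 0 = risingFactorial θ n := by simp [hB, risingFactorial]
  have hBn : B n = 0 := by
    simp [hB, Nat.choose_eq_zero_of_lt (by omega : n - 1 < n)]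
  rw [hB0, hBn, sub_zero, div_self (ne_of_gt hrfn)]
end

section
/- In the ordered Chinese Restaurant Process chain of ordered set partitions of {1,…,n}, conditionally given that the list of block sizes equals a composition (n₁,…,n_ℓ) of n, the conditional probability that the element 1 lies in the k-th block (of size n_k) equals p_k · ∏_{j=1}^{k−1} (1 − p_j), where p_j = n_j θ / (n_j θ + N_{j+1} α) and N_{j+1} = ∑_{i=j+1}^{ℓ} n_i, for every 1 ≤ k ≤ ℓ. -/
/-- The law of the ordered set partition `Π̃_n` of `{1,…,n}` generated by the ordered
Chinese Restaurant Process with parameters `(α, θ)`: `Π̃₀` is the empty list; given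
`Π̃_n = (B₁,…,B_k)`, customer `n+1` joins block `B_j` with probability
`(|B_j|−α)/(n+θ)`, forms a new singleton block inserted immediately to the left of `B_j`
with probability `α/(n+θ)`, and forms a new singleton block appended at the right end
with probability `θ/(n+θ)`.  (In particular `Π̃₁ = ({1})` almost surely.)  The recursion
computes the probability mass function by locating the block of `P` containing the last
customer `n+1`. -/
noncomputable def ocrpPartLaw (α θ : ℝ) : ℕ → List (Finset ℕ) → ℝ
  | 0, P => if P = [] then 1 else 0
  | n + 1, P =>
      ∑ j ∈ Finset.range P.length,
        (if n + 1 ∈ P.getD j ∅ then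
          (if P.getD j ∅ = {n + 1} then
            (if j + 1 = P.length then ocrpPartLaw α θ n (P.eraseIdx j) * (θ / ((n : ℝ) + θ))
             else ocrpPartLaw α θ n (P.eraseIdx j) * (α / ((n : ℝ) + θ)))
          else
            ocrpPartLaw α θ n (P.set j (P.getD j ∅ \ {n + 1})) *
              ((((P.getD j ∅).card : ℝ) - 1 - α) / ((n : ℝ) + θ)))
        else 0)

/-- The switching probability `p_j = n_j θ / (n_j θ + N_{j+1} α)` for a composition `c`,
where `N_{j+1} = n_{j+1} + ⋯ + n_ℓ` (`j` is 0-indexed here). -/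
noncomputable def switchProb (α θ : ℝ) (c : List ℕ) (j : ℕ) : ℝ :=
  ((c.getD j 0 : ℝ) * θ) / ((c.getD j 0 : ℝ) * θ + ((c.drop (j + 1)).sum : ℝ) * α)

open Finset
def unionL (P : List (Finset ℕ)) : Finset ℕ := P.foldr (· ∪ ·) ∅
def cnd (B U : Finset ℕ) : Prop := ∃ b ∈ B, ∀ x ∈ U, b ≤ x
instance (B U : Finset ℕ) : Decidable (cnd B U) := by unfold cnd; infer_instance
noncomputable def wgt (α θ : ℝ) : List (Finset ℕ) → ℝ
  | [] => 1
  | B :: L => (if cnd B (unionL L) then θ else α) * wgt α θ L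
@[simp] lemma wgt_nil (α θ : ℝ) : wgt α θ [] = 1 := rfl
@[simp] lemma wgt_cons (α θ : ℝ) (B L) :
    wgt α θ (B :: L) = (if cnd B (unionL L) then θ else α) * wgt α θ L := rfl
lemma unionL_nil : unionL [] = ∅ := rfl
lemma unionL_cons (B L) : unionL (B :: L) = B ∪ unionL L := rfl
lemma unionL_append (L₁ L₂ : List (Finset ℕ)) : unionL (L₁ ++ L₂) = unionL L₁ ∪ unionL L₂ := by
  induction L₁ with
  | nil => simp [unionL_nil, unionL_cons]
  | cons B L ih => simp [unionL_cons, ih, union_assoc]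
lemma mem_unionL {x : ℕ} {P : List (Finset ℕ)} : x ∈ unionL P ↔ ∃ B ∈ P, x ∈ B := by
  induction P with
  | nil => simp [unionL_nil]
  | cons C L ih => simp [unionL_cons, ih]
lemma subset_unionL {B : Finset ℕ} {P : List (Finset ℕ)} (h : B ∈ P) : B ⊆ unionL P :=
  fun x hx => mem_unionL.2 ⟨B, h, hx⟩
lemma disjoint_unionL {B : Finset ℕ} {P : List (Finset ℕ)} (h : ∀ C ∈ P, Disjoint B C) :
    Disjoint B (unionL P) := by
  induction P with
  | nil => simp [unionL_nil]
  | cons C L ih =>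
    rw [unionL_cons, disjoint_union_right]
    exact ⟨h C (by simp), ih fun D hD => h D (by simp [hD])⟩

lemma cnd_insert {C U : Finset ℕ} {m : ℕ} (hC : ∀ b ∈ C, b ≤ m) :
    cnd C (insert m U) ↔ cnd C U := by
  constructor
  · rintro ⟨b, hb, h⟩; exact ⟨b, hb, fun x hx => h x (mem_insert_of_mem hx)⟩
  · rintro ⟨b, hb, h⟩
    refine ⟨b, hb, fun x hx => ?_⟩
    rcases mem_insert.1 hx with rfl | hx
    · exact hC b hb
    · exact h x hx

lemma cnd_insert_left {B U : Finset ℕ} {m : ℕ} (hB : B.Nonempty) (hU : ∀ x ∈ U, x < m) :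
    cnd (insert m B) U ↔ cnd B U := by
  constructor
  · rintro ⟨b, hb, h⟩
    rcases mem_insert.1 hb with rfl | hb
    · obtain ⟨b₀, hb₀⟩ := hB
      exact ⟨b₀, hb₀, fun x hx => absurd (h x hx) (Nat.not_le.2 (hU x hx))⟩
    · exact ⟨b, hb, h⟩
  · rintro ⟨b, hb, h⟩; exact ⟨b, mem_insert_of_mem hb, h⟩

lemma wgt_insert_middle {α θ : ℝ} {m : ℕ} (L₁ L₂ : List (Finset ℕ)) (B : Finset ℕ)
    (hB : B.Nonempty) (hBle : ∀ b ∈ B, b ≤ m)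
    (h1 : ∀ C ∈ L₁, ∀ b ∈ C, b ≤ m) (h2 : ∀ C ∈ L₂, ∀ x ∈ C, x < m) :
    wgt α θ (L₁ ++ insert m B :: L₂) = wgt α θ (L₁ ++ B :: L₂) := by
  induction L₁ with
  | nil =>
    rw [List.nil_append, List.nil_append, wgt_cons, wgt_cons,
      if_congr (cnd_insert_left hB fun x hx => by
        obtain ⟨C, hC, hxC⟩ := mem_unionL.1 hx
        exact h2 C hC x hxC) rfl rfl]
  | cons C L ih =>
    rw [List.cons_append, List.cons_append, wgt_cons, wgt_cons,
      ih (fun D hD => h1 D (by simp [hD]))]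
    have hu : unionL (L ++ insert m B :: L₂) = insert m (unionL (L ++ B :: L₂)) := by
      rw [unionL_append, unionL_append, unionL_cons, unionL_cons]
      ext x; simp only [mem_union, mem_insert, mem_singleton]; tauto
    rw [hu, if_congr (cnd_insert (h1 C (by simp))) rfl rfl]

lemma wgt_singleton_middle {α θ : ℝ} {m : ℕ} (L₁ L₂ : List (Finset ℕ))
    (h1 : ∀ C ∈ L₁, ∀ b ∈ C, b ≤ m) (h2 : ∀ C ∈ L₂, ∀ x ∈ C, x < m)
    (h2ne : ∀ C ∈ L₂, C.Nonempty) :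
    wgt α θ (L₁ ++ {m} :: L₂) = (if L₂ = [] then θ else α) * wgt α θ (L₁ ++ L₂) := by
  induction L₁ with
  | nil =>
    rw [List.nil_append, List.nil_append, wgt_cons]
    rcases L₂ with _ | ⟨C, L⟩
    · simp [cnd, unionL_nil]
    · have hc : ¬ cnd {m} (unionL (C :: L)) := by
        rintro ⟨b, hb, h⟩
        rw [mem_singleton] at hb; subst hb
        obtain ⟨c₀, hc₀⟩ := h2ne C (by simp)
        have := h c₀ (mem_unionL.2 ⟨C, by simp, hc₀⟩)
        exact absurd this (Nat.not_le.2 (h2 C (by simp) c₀ hc₀))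
      simp [hc]
  | cons C L ih =>
    rw [List.cons_append, List.cons_append, wgt_cons, wgt_cons,
      ih (fun D hD => h1 D (by simp [hD]))]
    have hu : unionL (L ++ {m} :: L₂) = insert m (unionL (L ++ L₂)) := by
      rw [unionL_append, unionL_append, unionL_cons]
      ext x; simp only [mem_union, mem_insert, mem_singleton]; tauto
    rw [hu, if_congr (cnd_insert (h1 C (by simp))) rfl rfl]
    ring

def ValidP (n : ℕ) (P : List (Finset ℕ)) : Prop :=
  P.Pairwise Disjoint ∧ (∀ B ∈ P, B.Nonempty) ∧ unionL P = Finset.Icc 1 n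

lemma Icc_succ (n : ℕ) : Finset.Icc 1 (n+1) = insert (n+1) (Finset.Icc 1 n) := by
  ext x; simp [Finset.mem_Icc]; omega

lemma not_mem_Icc_self (n : ℕ) : n + 1 ∉ Finset.Icc 1 n := by simp

lemma validP_zero_iff (P : List (Finset ℕ)) : ValidP 0 P ↔ P = [] := by
  constructor
  · rintro ⟨_, hne, hu⟩
    cases P with
    | nil => rfl
    | cons B L =>
      obtain ⟨b, hb⟩ := hne B (by simp)
      have : b ∈ unionL (B :: L) := subset_unionL (by simp) hb
      rw [hu] at this; simp at this
  · rintro rfl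
    refine ⟨by simp, by simp, ?_⟩
    rw [unionL_nil]; ext x; simp

lemma insert_unionL_middle (m : ℕ) (L₁ L₂ : List (Finset ℕ)) (B : Finset ℕ) :
    unionL (L₁ ++ insert m B :: L₂) = insert m (unionL (L₁ ++ B :: L₂)) := by
  rw [unionL_append, unionL_append, unionL_cons, unionL_cons]
  ext x; simp only [mem_union, mem_insert]; tauto

lemma validP_insert_iff {n : ℕ} (L₁ L₂ : List (Finset ℕ)) (B : Finset ℕ)
    (hB : B.Nonempty) (hBn : n + 1 ∉ B) :
    ValidP (n+1) (L₁ ++ insert (n+1) B :: L₂) ↔ ValidP n (L₁ ++ B :: L₂) := by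
  have hsym : ∀ {x y : Finset ℕ}, Disjoint x y → Disjoint y x := fun h => h.symm
  constructor
  · rintro ⟨hpw, hne, hu⟩
    rw [List.pairwise_middle hsym, List.pairwise_cons] at hpw
    obtain ⟨hdisj, hpw⟩ := hpw
    have hnotmem : ∀ C ∈ L₁ ++ L₂, (n+1) ∉ C := fun C hC hx =>
      (Finset.disjoint_insert_left.1 (hdisj C hC)).1 hx
    have hXn : n + 1 ∉ unionL (L₁ ++ B :: L₂) := by
      rw [mem_unionL]
      rintro ⟨C, hC, hxC⟩
      rcases List.mem_append.1 hC with h | h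
      · exact hnotmem C (List.mem_append_left _ h) hxC
      · rcases List.mem_cons.1 h with rfl | h
        · exact hBn hxC
        · exact hnotmem C (List.mem_append_right _ h) hxC
    refine ⟨?_, ?_, ?_⟩
    · rw [List.pairwise_middle hsym, List.pairwise_cons]
      exact ⟨fun C hC => ((Finset.disjoint_insert_left.1 (hdisj C hC)).2), hpw⟩
    · intro C hC
      rcases List.mem_append.1 hC with h | h
      · exact hne C (List.mem_append_left _ h)
      · rcases List.mem_cons.1 h with rfl | h
        · exact hB
        · exact hne C (List.mem_append_right _ (List.mem_cons_of_mem _ h))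
    · rw [insert_unionL_middle] at hu
      have := congrArg (fun s => Finset.erase s (n+1)) hu
      simpa [Finset.erase_insert hXn, Icc_succ n, Finset.erase_insert (not_mem_Icc_self n)]
        using this
  · rintro ⟨hpw, hne, hu⟩
    rw [List.pairwise_middle hsym, List.pairwise_cons] at hpw
    obtain ⟨hdisj, hpw⟩ := hpw
    have hsub : ∀ C ∈ L₁ ++ B :: L₂, C ⊆ Finset.Icc 1 n := fun C hC => hu ▸ subset_unionL hC
    have hnC : ∀ C ∈ L₁ ++ L₂, (n+1) ∉ C := by
      intro C hC hx
      have : C ⊆ Finset.Icc 1 n := by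
        rcases List.mem_append.1 hC with h | h
        · exact hsub C (List.mem_append_left _ h)
        · exact hsub C (List.mem_append_right _ (List.mem_cons_of_mem _ h))
      exact not_mem_Icc_self n (this hx)
    refine ⟨?_, ?_, ?_⟩
    · rw [List.pairwise_middle hsym, List.pairwise_cons]
      exact ⟨fun C hC => Finset.disjoint_insert_left.2 ⟨hnC C hC, hdisj C hC⟩, hpw⟩
    · intro C hC
      rcases List.mem_append.1 hC with h | h
      · exact hne C (List.mem_append_left _ h)
      · rcases List.mem_cons.1 h with rfl | h
        · exact hB.mono (Finset.subset_insert _ _)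
        · exact hne C (List.mem_append_right _ (List.mem_cons_of_mem _ h))
    · rw [insert_unionL_middle, hu, Icc_succ n]

lemma validP_singleton_iff {n : ℕ} (L₁ L₂ : List (Finset ℕ)) :
    ValidP (n+1) (L₁ ++ {n+1} :: L₂) ↔ ValidP n (L₁ ++ L₂) := by
  have hsym : ∀ {x y : Finset ℕ}, Disjoint x y → Disjoint y x := fun h => h.symm
  constructor
  · rintro ⟨hpw, hne, hu⟩
    rw [List.pairwise_middle hsym, List.pairwise_cons] at hpw
    obtain ⟨hdisj, hpw⟩ := hpw
    have hnotmem : ∀ C ∈ L₁ ++ L₂, (n+1) ∉ C := fun C hC hx =>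
      (Finset.disjoint_singleton_left.1 (hdisj C hC)) hx
    have hXn : n + 1 ∉ unionL (L₁ ++ L₂) := by
      rw [mem_unionL]; rintro ⟨C, hC, hxC⟩; exact hnotmem C hC hxC
    refine ⟨hpw, ?_, ?_⟩
    · intro C hC
      rcases List.mem_append.1 hC with h | h
      · exact hne C (List.mem_append_left _ h)
      · exact hne C (List.mem_append_right _ (List.mem_cons_of_mem _ h))
    · have hu' : insert (n+1) (unionL (L₁ ++ L₂)) = Finset.Icc 1 (n+1) := by
        rw [← hu, unionL_append, unionL_append, unionL_cons]
        ext x; simp only [mem_union, mem_insert, mem_singleton]; tauto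
      have := congrArg (fun s => Finset.erase s (n+1)) hu'
      simpa [Finset.erase_insert hXn, Icc_succ n, Finset.erase_insert (not_mem_Icc_self n)]
        using this
  · rintro ⟨hpw, hne, hu⟩
    have hnC : ∀ C ∈ L₁ ++ L₂, (n+1) ∉ C := by
      intro C hC hx
      have : C ⊆ Finset.Icc 1 n := hu ▸ subset_unionL hC
      exact not_mem_Icc_self n (this hx)
    refine ⟨?_, ?_, ?_⟩
    · rw [List.pairwise_middle hsym, List.pairwise_cons]
      exact ⟨fun C hC => Finset.disjoint_singleton_left.2 (hnC C hC), hpw⟩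
    · intro C hC
      rcases List.mem_append.1 hC with h | h
      · exact hne C (List.mem_append_left _ h)
      · rcases List.mem_cons.1 h with rfl | h
        · exact ⟨n+1, by simp⟩
        · exact hne C (List.mem_append_right _ h)
    · have : unionL (L₁ ++ {n+1} :: L₂) = insert (n+1) (unionL (L₁ ++ L₂)) := by
        rw [unionL_append, unionL_append, unionL_cons]
        ext x; simp only [mem_union, mem_insert, mem_singleton]; tauto
      rw [this, hu, Icc_succ n]

noncomputable def ascB (α : ℝ) (B : Finset ℕ) : ℝ := ∏ i ∈ range (B.card - 1), ((i:ℝ) + 1 - α)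

noncomputable def lawF (α θ : ℝ) (n : ℕ) (P : List (Finset ℕ)) : ℝ :=
  (P.map (ascB α)).prod * wgt α θ P / ∏ i ∈ range n, ((i:ℝ) + θ)

lemma lawF_singleton (α θ : ℝ) (n : ℕ) (L₁ L₂ : List (Finset ℕ))
    (h1 : ∀ C ∈ L₁, ∀ b ∈ C, b ≤ n+1) (h2 : ∀ C ∈ L₂, ∀ x ∈ C, x < n+1)
    (h2ne : ∀ C ∈ L₂, C.Nonempty) :
    lawF α θ (n+1) (L₁ ++ {n+1} :: L₂)
      = lawF α θ n (L₁ ++ L₂) * ((if L₂ = [] then θ else α) / ((n:ℝ) + θ)) := by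
  unfold lawF
  rw [List.map_append, List.map_cons, List.prod_append, List.prod_cons,
    List.map_append, List.prod_append,
    wgt_singleton_middle L₁ L₂ h1 h2 h2ne, prod_range_succ]
  have hasc : ascB α {n+1} = 1 := by simp [ascB]
  rw [hasc, ← div_div]
  ring

lemma lawF_insert (α θ : ℝ) (n : ℕ) (L₁ L₂ : List (Finset ℕ)) (B : Finset ℕ)
    (hB : B.Nonempty) (hm : n+1 ∉ B)
    (h1 : ∀ C ∈ L₁, ∀ b ∈ C, b ≤ n+1) (hBle : ∀ b ∈ B, b ≤ n+1)
    (h2 : ∀ C ∈ L₂, ∀ x ∈ C, x < n+1) :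
    lawF α θ (n+1) (L₁ ++ insert (n+1) B :: L₂)
      = lawF α θ n (L₁ ++ B :: L₂) * (((B.card : ℝ) - α) / ((n:ℝ) + θ)) := by
  unfold lawF
  rw [List.map_append, List.map_cons, List.prod_append, List.prod_cons,
    List.map_append, List.map_cons, List.prod_append, List.prod_cons,
    wgt_insert_middle L₁ L₂ B hB hBle h1 h2, prod_range_succ]
  have hcard : 1 ≤ B.card := Finset.card_pos.2 hB
  have hasc : ascB α (insert (n+1) B) = ascB α B * ((B.card : ℝ) - α) := by
    unfold ascB
    rw [Finset.card_insert_of_notMem hm, Nat.add_sub_cancel]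
    conv_lhs => rw [show B.card = (B.card - 1) + 1 by omega, prod_range_succ]
    congr 1
    push_cast [Nat.cast_sub hcard]
    ring
  rw [hasc, ← div_div]
  ring

open Classical in
theorem law_eq (α θ : ℝ) : ∀ (n : ℕ) (P : List (Finset ℕ)),
    ocrpPartLaw α θ n P = if ValidP n P then lawF α θ n P else 0 := by
  intro n
  induction n with
  | zero =>
    intro P
    by_cases h : P = []
    · subst h
      rw [show ocrpPartLaw α θ 0 [] = 1 from rfl, if_pos ((validP_zero_iff []).2 rfl)]
      simp [lawF]
    · rw [show ocrpPartLaw α θ 0 P = if P = [] then 1 else 0 from rfl, if_neg h,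
        if_neg (fun hV => h ((validP_zero_iff P).1 hV))]
  | succ n ih =>
    intro P
    simp only [ocrpPartLaw]
    by_cases hV : ValidP (n+1) P
    · obtain ⟨hpw, hne, hu⟩ := hV
      have hmem : n+1 ∈ unionL P := by rw [hu]; simp
      obtain ⟨B₀, hB₀P, hB₀⟩ := mem_unionL.1 hmem
      obtain ⟨j0, hj0, hPj0⟩ := List.mem_iff_getElem.1 hB₀P
      have hgetD : P.getD j0 ∅ = P[j0] := List.getD_eq_getElem P ∅ hj0
      have hmem0 : n+1 ∈ P[j0] := by rw [hPj0]; exact hB₀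
      rw [Finset.sum_eq_single_of_mem j0 (mem_range.2 hj0) ?hzero]
      case hzero =>
        intro j hj hne'
        have hjlen : j < P.length := mem_range.1 hj
        rw [List.getD_eq_getElem P ∅ hjlen, if_neg]
        intro hmemj
        have hd : Disjoint P[j] P[j0] := by
          rcases lt_or_gt_of_ne hne' with h' | h'
          · exact List.pairwise_iff_getElem.1 hpw j j0 hjlen hj0 h'
          · exact (List.pairwise_iff_getElem.1 hpw j0 j hj0 hjlen h').symm
        exact Finset.disjoint_left.1 hd hmemj hmem0
      rw [hgetD, if_pos hmem0]
      set L₁ := P.take j0 with hL₁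
      set L₂ := P.drop (j0+1) with hL₂
      have hdec : P = L₁ ++ P[j0] :: L₂ := by
        conv_lhs => rw [← List.take_append_drop j0 P]
        rw [List.drop_eq_getElem_cons hj0]
      have hVP : ValidP (n+1) P := ⟨hpw, hne, hu⟩
      have hsub : ∀ C ∈ P, C ⊆ Finset.Icc 1 (n+1) := fun C hC => hu ▸ subset_unionL hC
      have hmemL₁ : ∀ C ∈ L₁, C ∈ P := fun C hC => (List.take_sublist _ _).mem hC
      have hmemL₂ : ∀ C ∈ L₂, C ∈ P := fun C hC => (List.drop_sublist _ _).mem hC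
      have h1 : ∀ C ∈ L₁, ∀ b ∈ C, b ≤ n+1 := fun C hC b hb =>
        (Finset.mem_Icc.1 (hsub C (hmemL₁ C hC) hb)).2
      have hpw' : List.Pairwise Disjoint (L₁ ++ P[j0] :: L₂) := hdec ▸ hpw
      obtain ⟨pwL₁, pwB, hcross⟩ := List.pairwise_append.1 hpw'
      obtain ⟨hdisjB, pwL₂⟩ := List.pairwise_cons.1 pwB
      have h2 : ∀ C ∈ L₂, ∀ x ∈ C, x < n+1 := by
        intro C hC x hx
        have hle : x ≤ n+1 := (Finset.mem_Icc.1 (hsub C (hmemL₂ C hC) hx)).2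
        rcases eq_or_lt_of_le hle with rfl | h'
        · exact absurd hmem0 (Finset.disjoint_right.1 (hdisjB C hC) hx)
        · exact h'
      have h2ne : ∀ C ∈ L₂, C.Nonempty := fun C hC => hne C (hmemL₂ C hC)
      have hlenP : P.length = j0 + 1 + L₂.length := by
        conv_lhs => rw [hdec]
        simp [hL₁, List.length_take, Nat.min_eq_left (le_of_lt hj0)]
        omega
      by_cases hsing : P[j0] = ({n+1} : Finset ℕ)
      · rw [if_pos hsing]
        have herase : P.eraseIdx j0 = L₁ ++ L₂ := List.eraseIdx_eq_take_drop_succ P j0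
        have hV' : ValidP n (L₁ ++ L₂) := by
          apply (validP_singleton_iff L₁ L₂).1
          rw [← hsing, ← hdec]; exact hVP
        have hval : ocrpPartLaw α θ n (P.eraseIdx j0) = lawF α θ n (L₁ ++ L₂) := by
          rw [herase, ih, if_pos hV']
        have hiff : (j0 + 1 = P.length) ↔ L₂ = [] := by
          rw [hlenP, ← List.length_eq_zero_iff]
          omega
        rw [if_pos hVP]
        conv_rhs => rw [hdec, hsing]
        rw [lawF_singleton α θ n L₁ L₂ h1 h2 h2ne]
        split_ifs with ha hb hb
        · rw [hval]
        · exact absurd (hiff.1 ha) hb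
        · exact absurd (hiff.2 hb) ha
        · rw [hval]
      · rw [if_neg hsing]
        have hBne : (P[j0].erase (n+1)).Nonempty := by
          rw [Finset.nonempty_iff_ne_empty]
          intro h
          apply hsing
          apply Finset.eq_singleton_iff_unique_mem.2 ⟨hmem0, fun x hx => ?_⟩
          by_contra hxne
          exact absurd (Finset.mem_erase.2 ⟨hxne, hx⟩) (by rw [h]; simp)
        have hBeq : insert (n+1) (P[j0].erase (n+1)) = P[j0] := Finset.insert_erase hmem0
        have hsd : P[j0] \ {n+1} = P[j0].erase (n+1) := Finset.sdiff_singleton_eq_erase _ _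
        have hset : P.set j0 (P[j0] \ {n+1}) = L₁ ++ (P[j0].erase (n+1)) :: L₂ := by
          rw [hsd]; exact List.set_eq_take_cons_drop _ hj0
        have hV' : ValidP n (L₁ ++ (P[j0].erase (n+1)) :: L₂) := by
          apply (validP_insert_iff L₁ L₂ _ hBne (Finset.notMem_erase _ _)).1
          rw [hBeq, ← hdec]; exact hVP
        rw [hset, ih, if_pos hV', if_pos hVP]
        conv_rhs => rw [hdec, ← hBeq]
        have hBle : ∀ b ∈ P[j0].erase (n+1), b ≤ n+1 := fun b hb =>
          (Finset.mem_Icc.1 (hsub _ (hPj0 ▸ hB₀P) (Finset.mem_of_mem_erase hb))).2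
        rw [lawF_insert α θ n L₁ L₂ _ hBne (Finset.notMem_erase _ _) h1 hBle h2]
        have h1c : 1 ≤ P[j0].card := Finset.card_pos.2 ⟨_, hmem0⟩
        have hcard : (P[j0].card : ℝ) = ((P[j0].erase (n+1)).card : ℝ) + 1 := by
          rw [Finset.card_erase_of_mem hmem0, Nat.cast_sub h1c]
          ring
        rw [hcard]; ring
    · rw [if_neg hV]
      apply Finset.sum_eq_zero
      intro j hj
      have hjlen : j < P.length := mem_range.1 hj
      rw [List.getD_eq_getElem P ∅ hjlen]
      by_cases hmemj : n+1 ∈ P[j]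
      swap
      · rw [if_neg hmemj]
      rw [if_pos hmemj]
      have hdec : P = P.take j ++ P[j] :: P.drop (j+1) := by
        conv_lhs => rw [← List.take_append_drop j P]
        rw [List.drop_eq_getElem_cons hjlen]
      by_cases hsing : P[j] = ({n+1} : Finset ℕ)
      · rw [if_pos hsing]
        have hinval : ¬ ValidP n (P.take j ++ P.drop (j+1)) := by
          intro h
          exact hV (by rw [hdec, hsing]; exact (validP_singleton_iff _ _).2 h)
        have h0 : ocrpPartLaw α θ n (P.eraseIdx j) = 0 := by
          rw [List.eraseIdx_eq_take_drop_succ, ih, if_neg hinval]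
        split_ifs <;> rw [h0, zero_mul]
      · rw [if_neg hsing]
        have hinval : ¬ ValidP n (P.take j ++ (P[j] \ {n+1}) :: P.drop (j+1)) := by
          intro h
          have hBne : (P[j] \ {n+1}).Nonempty := h.2.1 _ (by simp)
          apply hV
          rw [hdec]
          have heq : insert (n+1) (P[j] \ {n+1}) = P[j] := by
            rw [Finset.sdiff_singleton_eq_erase, Finset.insert_erase hmemj]
          rw [← heq]
          refine (validP_insert_iff _ _ _ hBne ?_).2 h
          rw [Finset.sdiff_singleton_eq_erase]
          exact Finset.notMem_erase _ _
        rw [show P.set j (P[j] \ {n+1}) = P.take j ++ (P[j] \ {n+1}) :: P.drop (j+1) from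
          List.set_eq_take_cons_drop _ hjlen, ih, if_neg hinval, zero_mul]

def parts : List ℕ → Finset ℕ → Finset (List (Finset ℕ))
  | [], A => if A = ∅ then {[]} else ∅
  | m :: c, A => (A.powersetCard m).biUnion fun S => (parts c (A \ S)).image (S :: ·)

lemma mem_parts : ∀ (c : List ℕ) (A : Finset ℕ) (P : List (Finset ℕ)),
    P ∈ parts c A ↔ (P.map Finset.card = c ∧ P.Pairwise Disjoint ∧ unionL P = A) := by
  intro c
  induction c with
  | nil =>
    intro A P
    simp only [parts]
    split_ifs with h
    · subst h
      simp only [mem_singleton]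
      constructor
      · rintro rfl; exact ⟨rfl, by simp, unionL_nil⟩
      · rintro ⟨hmap, -, -⟩; exact List.map_eq_nil_iff.1 hmap
    · simp only [Finset.notMem_empty, false_iff]
      rintro ⟨hmap, -, hu⟩
      have hP : P = [] := List.map_eq_nil_iff.1 hmap
      subst hP
      exact h (by rw [← hu, unionL_nil])
  | cons m c ih =>
    intro A P
    simp only [parts, Finset.mem_biUnion, Finset.mem_image]
    constructor
    · rintro ⟨S, hS, Q, hQ, rfl⟩
      obtain ⟨hSsub, hScard⟩ := Finset.mem_powersetCard.1 hS
      obtain ⟨hmap, hpw, hu⟩ := (ih _ _).1 hQ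
      refine ⟨by simp [hmap, hScard], ?_, ?_⟩
      · rw [List.pairwise_cons]
        refine ⟨fun C hC => ?_, hpw⟩
        have hCs : C ⊆ A \ S := hu ▸ subset_unionL hC
        exact (Finset.sdiff_disjoint.mono_left hCs).symm
      · rw [unionL_cons, hu, Finset.union_sdiff_of_subset hSsub]
    · rintro ⟨hmap, hpw, hu⟩
      cases P with
      | nil => simp at hmap
      | cons B Q =>
        simp only [List.map_cons, List.cons.injEq] at hmap
        obtain ⟨hBcard, hQmap⟩ := hmap
        obtain ⟨hdisj, hpwQ⟩ := List.pairwise_cons.1 hpw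
        rw [unionL_cons] at hu
        have hBsub : B ⊆ A := by rw [← hu]; exact subset_union_left
        have hdU : Disjoint B (unionL Q) := disjoint_unionL hdisj
        have hQu : unionL Q = A \ B := by rw [← hu, Finset.union_sdiff_cancel_left hdU]
        exact ⟨B, Finset.mem_powersetCard.2 ⟨hBsub, hBcard⟩, Q,
          (ih _ _).2 ⟨hQmap, hpwQ, hQu⟩, rfl⟩

noncomputable def vsum (α θ : ℝ) : List ℕ → ℕ → ℝ
  | [], _ => 1
  | m :: c, N => (((N-1).choose (m-1) : ℝ) * θ + ((N-1).choose m : ℝ) * α) * vsum α θ c (N - m)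

-- counting subsets containing / not containing the min
lemma sum_if_mem (A : Finset ℕ) (a : ℕ) (haA : a ∈ A) (m : ℕ) (hm : 0 < m) (t f : ℝ) :
    ∑ S ∈ A.powersetCard m, (if a ∈ S then t else f)
      = ((A.card - 1).choose (m-1) : ℝ) * t + ((A.card - 1).choose m : ℝ) * f := by
  obtain ⟨mm, rfl⟩ : ∃ mm, m = mm + 1 := ⟨m - 1, by omega⟩
  conv_lhs => rw [show A = insert a (A.erase a) from (Finset.insert_erase haA).symm]
  rw [Finset.powersetCard_succ_insert (Finset.notMem_erase a A) mm]
  have hdisj : Disjoint ((A.erase a).powersetCard (mm+1))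
      (Finset.image (insert a) ((A.erase a).powersetCard mm)) := by
    rw [Finset.disjoint_left]
    intro S hS hS'
    obtain ⟨hsub, -⟩ := Finset.mem_powersetCard.1 hS
    obtain ⟨T, -, rfl⟩ := Finset.mem_image.1 hS'
    exact Finset.notMem_erase a A (hsub (Finset.mem_insert_self a T))
  rw [Finset.sum_union hdisj, Finset.sum_image ?hinj]
  case hinj =>
    intro x hx y hy hxy
    have hax : a ∉ x := fun h => Finset.notMem_erase a A ((Finset.mem_powersetCard.1 hx).1 h)
    have hay : a ∉ y := fun h => Finset.notMem_erase a A ((Finset.mem_powersetCard.1 hy).1 h)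
    rw [← Finset.erase_insert hax, ← Finset.erase_insert hay, hxy]
  have h1 : ∀ S ∈ (A.erase a).powersetCard (mm+1), (if a ∈ S then t else f) = f := by
    intro S hS
    rw [if_neg (fun h => Finset.notMem_erase a A ((Finset.mem_powersetCard.1 hS).1 h))]
  have h2 : ∀ S ∈ (A.erase a).powersetCard mm, (if a ∈ insert a S then t else f) = t := by
    intro S _; rw [if_pos (Finset.mem_insert_self a S)]
  rw [Finset.sum_congr rfl h1, Finset.sum_congr rfl h2, Finset.sum_const, Finset.sum_const,
    Finset.card_powersetCard, Finset.card_powersetCard, Finset.card_erase_of_mem haA,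
    Nat.add_sub_cancel, nsmul_eq_mul, nsmul_eq_mul]
  ring

lemma parts_biUnion_disj (m : ℕ) (c : List ℕ) (A : Finset ℕ) :
    (↑(A.powersetCard m) : Set (Finset ℕ)).PairwiseDisjoint
      (fun S => (parts c (A \ S)).image (S :: ·)) := by
  intro S _ T _ hST
  rw [Function.onFun, Finset.disjoint_left]
  rintro P hP hP'
  obtain ⟨Q, -, rfl⟩ := Finset.mem_image.1 hP
  obtain ⟨Q', -, h⟩ := Finset.mem_image.1 hP'
  injection h with h1 _
  exact hST h1.symm

lemma cnd_min_iff {A S : Finset ℕ} (hAne : A.Nonempty) (hsub : S ⊆ A) :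
    cnd S (A \ S) ↔ A.min' hAne ∈ S := by
  constructor
  · rintro ⟨b, hb, h⟩
    by_contra ha
    have haA : A.min' hAne ∈ A \ S := Finset.mem_sdiff.2 ⟨A.min'_mem hAne, ha⟩
    have h1 := h _ haA
    have h2 : A.min' hAne ≤ b := A.min'_le b (hsub hb)
    exact ha ((le_antisymm h1 h2).symm ▸ hb)
  · intro ha
    exact ⟨_, ha, fun x hx => A.min'_le x (Finset.mem_sdiff.1 hx).1⟩

lemma sum_wgt_parts (α θ : ℝ) : ∀ (c : List ℕ) (A : Finset ℕ), (∀ x ∈ c, 0 < x) →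
    c.sum = A.card → ∑ P ∈ parts c A, wgt α θ P = vsum α θ c A.card := by
  intro c
  induction c with
  | nil =>
    intro A _ hsum
    have hA : A = ∅ := Finset.card_eq_zero.1 (by simpa using hsum.symm)
    subst hA
    simp [parts, vsum]
  | cons m c ih =>
    intro A hpos hsum
    have hm : 0 < m := hpos m (by simp)
    have hmA : m ≤ A.card := by rw [← hsum, List.sum_cons]; exact Nat.le_add_right m c.sum
    have hAne : A.Nonempty := Finset.card_pos.1 (lt_of_lt_of_le hm hmA)
    simp only [parts]
    rw [Finset.sum_biUnion (parts_biUnion_disj m c A)]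
    have hstep : ∀ S ∈ A.powersetCard m,
        (∑ P ∈ (parts c (A \ S)).image (S :: ·), wgt α θ P)
          = (if A.min' hAne ∈ S then θ else α) * vsum α θ c (A.card - m) := by
      intro S hS
      obtain ⟨hsub, hcard⟩ := Finset.mem_powersetCard.1 hS
      rw [Finset.sum_image (fun x _ y _ h => by injection h)]
      have hcs : (A \ S).card = A.card - m := by rw [Finset.card_sdiff_of_subset hsub, hcard]
      have : ∀ Q ∈ parts c (A \ S), wgt α θ (S :: Q)
          = (if A.min' hAne ∈ S then θ else α) * wgt α θ Q := by
        intro Q hQ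
        rw [wgt_cons, ((mem_parts c (A \ S) Q).1 hQ).2.2,
          if_congr (cnd_min_iff hAne hsub) rfl rfl]
      rw [Finset.sum_congr rfl this, ← Finset.mul_sum,
        ih (A \ S) (fun x hx => hpos x (by simp [hx])) (by rw [hcs]; simp at hsum; omega), hcs]
    rw [Finset.sum_congr rfl hstep, ← Finset.sum_mul,
      sum_if_mem A _ (A.min'_mem hAne) m hm]
    simp only [vsum]

lemma choose_key (m N₂ : ℕ) (h1 : 1 ≤ m) :
    (((m + N₂ - 1).choose (m-1) : ℝ)) * N₂ = ((m + N₂ - 1).choose m : ℝ) * m := by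
  have h := Nat.choose_succ_right_eq (m+N₂-1) (m-1)
  rw [show m - 1 + 1 = m by omega, show (m+N₂-1) - (m-1) = N₂ by omega] at h
  exact_mod_cast congrArg (Nat.cast : ℕ → ℝ) h.symm

lemma den_pos (α θ : ℝ) (hα : 0 < α) (hθ : 0 < θ) (m N₂ : ℕ) (h1 : 1 ≤ m) :
    (0:ℝ) < (m:ℝ)*θ + (N₂:ℝ)*α := by
  have hm : (1:ℝ) ≤ (m:ℝ) := by exact_mod_cast h1
  have h2 : (0:ℝ) ≤ (N₂:ℝ)*α := by positivity
  nlinarith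

lemma alg_p0 (α θ : ℝ) (hα : 0 < α) (hθ : 0 < θ) (m N₂ : ℕ) (h1 : 1 ≤ m) :
    ((m + N₂ - 1).choose (m-1) : ℝ) * θ
      = (((m + N₂ - 1).choose (m-1) : ℝ) * θ + ((m + N₂ - 1).choose m : ℝ) * α)
        * ((m : ℝ) * θ / ((m:ℝ) * θ + (N₂:ℝ) * α)) := by
  have hden := den_pos α θ hα hθ m N₂ h1
  field_simp
  linear_combination (α) * choose_key m N₂ h1

lemma alg_q0 (α θ : ℝ) (hα : 0 < α) (hθ : 0 < θ) (m N₂ : ℕ) (h1 : 1 ≤ m) :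
    ((m + N₂ - 1).choose m : ℝ) * α
      = (((m + N₂ - 1).choose (m-1) : ℝ) * θ + ((m + N₂ - 1).choose m : ℝ) * α)
        * (1 - (m : ℝ) * θ / ((m:ℝ) * θ + (N₂:ℝ) * α)) := by
  have hden := den_pos α θ hα hθ m N₂ h1
  field_simp
  linear_combination (-θ*α) * choose_key m N₂ h1

lemma switchProb_cons (α θ : ℝ) (m : ℕ) (c : List ℕ) (j : ℕ) :
    switchProb α θ (m :: c) (j+1) = switchProb α θ c j := by
  simp [switchProb, List.getD_cons_succ, List.drop_succ_cons]

lemma sum_wgt_parts_filter (α θ : ℝ) (hα : 0 < α) (hθ : 0 < θ) :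
    ∀ (k : ℕ) (c : List ℕ) (A : Finset ℕ) (a : ℕ), (∀ x ∈ c, 0 < x) → c.sum = A.card →
    k < c.length → a ∈ A → (∀ x ∈ A, a ≤ x) →
    ∑ P ∈ parts c A, (if a ∈ P.getD k ∅ then wgt α θ P else 0)
      = vsum α θ c A.card
        * (switchProb α θ c k * ∏ j ∈ Finset.range k, (1 - switchProb α θ c j)) := by
  intro k
  induction k with
  | zero =>
    rintro (_ | ⟨m, c⟩) A a hpos hsum hk haA hmin
    · simp at hk
    have hm : 0 < m := hpos m (by simp)
    have hmA : m ≤ A.card := by rw [← hsum, List.sum_cons]; exact Nat.le_add_right m c.sum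
    have hAne : A.Nonempty := Finset.card_pos.1 (lt_of_lt_of_le hm hmA)
    have hamin : a = A.min' hAne :=
      le_antisymm (hmin _ (A.min'_mem hAne)) (A.min'_le a haA)
    subst hamin
    have hN : A.card = m + c.sum := by rw [← hsum, List.sum_cons]
    simp only [parts]
    rw [Finset.sum_biUnion (parts_biUnion_disj m c A)]
    have hstep : ∀ S ∈ A.powersetCard m,
        (∑ P ∈ (parts c (A \ S)).image (S :: ·),
            (if A.min' hAne ∈ P.getD 0 ∅ then wgt α θ P else 0))
          = (if A.min' hAne ∈ S then θ else 0) * vsum α θ c c.sum := by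
      intro S hS
      obtain ⟨hsub, hcard⟩ := Finset.mem_powersetCard.1 hS
      rw [Finset.sum_image (fun x _ y _ h => by injection h)]
      have hcs : (A \ S).card = c.sum := by rw [Finset.card_sdiff_of_subset hsub, hcard]; omega
      have heval : ∀ Q ∈ parts c (A \ S),
          (if A.min' hAne ∈ (S :: Q).getD 0 ∅ then wgt α θ (S :: Q) else 0)
            = (if A.min' hAne ∈ S then θ else 0) * wgt α θ Q := by
        intro Q hQ
        rw [List.getD_cons_zero, wgt_cons, ((mem_parts c (A \ S) Q).1 hQ).2.2,
          if_congr (cnd_min_iff hAne hsub) rfl rfl]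
        by_cases h : A.min' hAne ∈ S
        · rw [if_pos h, if_pos h, if_pos h]
        · rw [if_neg h, if_neg h, zero_mul]
      rw [Finset.sum_congr rfl heval, ← Finset.mul_sum,
        sum_wgt_parts α θ c (A \ S) (fun x hx => hpos x (by simp [hx])) (by omega), hcs]
    rw [Finset.sum_congr rfl hstep, ← Finset.sum_mul,
      sum_if_mem A _ (A.min'_mem hAne) m hm, hN]
    rw [show switchProb α θ (m :: c) 0 = (m:ℝ)*θ/((m:ℝ)*θ + (c.sum:ℝ)*α) by
      simp [switchProb]]
    simp only [vsum, Nat.add_sub_cancel_left, Finset.range_zero, Finset.prod_empty]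
    rw [mul_zero, add_zero, mul_one]
    linear_combination (vsum α θ c c.sum) * alg_p0 α θ hα hθ m c.sum hm
  | succ k ih =>
    rintro (_ | ⟨m, c⟩) A a hpos hsum hk haA hmin
    · simp at hk
    have hm : 0 < m := hpos m (by simp)
    have hmA : m ≤ A.card := by rw [← hsum, List.sum_cons]; exact Nat.le_add_right m c.sum
    have hAne : A.Nonempty := Finset.card_pos.1 (lt_of_lt_of_le hm hmA)
    have hamin : a = A.min' hAne :=
      le_antisymm (hmin _ (A.min'_mem hAne)) (A.min'_le a haA)
    have hkc : k < c.length := by simpa using hk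
    have hN : A.card = m + c.sum := by rw [← hsum, List.sum_cons]
    simp only [parts]
    rw [Finset.sum_biUnion (parts_biUnion_disj m c A)]
    have hstep : ∀ S ∈ A.powersetCard m,
        (∑ P ∈ (parts c (A \ S)).image (S :: ·),
            (if a ∈ P.getD (k+1) ∅ then wgt α θ P else 0))
          = (if a ∈ S then 0 else
              α * (vsum α θ c c.sum
                * (switchProb α θ c k * ∏ j ∈ Finset.range k, (1 - switchProb α θ c j)))) := by
      intro S hS
      obtain ⟨hsub, hcard⟩ := Finset.mem_powersetCard.1 hS
      rw [Finset.sum_image (fun x _ y _ h => by injection h)]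
      have hcs : (A \ S).card = c.sum := by rw [Finset.card_sdiff_of_subset hsub, hcard]; omega
      by_cases h : a ∈ S
      · rw [if_pos h]
        apply Finset.sum_eq_zero
        intro Q hQ
        obtain ⟨hQmap, -, hQu⟩ := (mem_parts c (A \ S) Q).1 hQ
        have hQlen : k < Q.length := by
          rw [← List.length_map Finset.card, hQmap]; exact hkc
        rw [List.getD_cons_succ, if_neg]
        intro hmem
        have : a ∈ unionL Q := subset_unionL (by
          rw [List.getD_eq_getElem Q ∅ hQlen] at hmem ⊢
          exact List.getElem_mem hQlen) hmem
        rw [hQu] at this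
        exact (Finset.mem_sdiff.1 this).2 h
      · rw [if_neg h]
        have heval : ∀ Q ∈ parts c (A \ S),
            (if a ∈ (S :: Q).getD (k+1) ∅ then wgt α θ (S :: Q) else 0)
              = α * (if a ∈ Q.getD k ∅ then wgt α θ Q else 0) := by
          intro Q hQ
          rw [List.getD_cons_succ, wgt_cons, ((mem_parts c (A \ S) Q).1 hQ).2.2,
            if_congr (cnd_min_iff hAne hsub) rfl rfl, if_neg (show A.min' hAne ∉ S by rw [← hamin]; exact h)]
          by_cases h' : a ∈ Q.getD k ∅
          · rw [if_pos h', if_pos h']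
          · rw [if_neg h', if_neg h', mul_zero]
        rw [Finset.sum_congr rfl heval, ← Finset.mul_sum,
          ih c (A \ S) a (fun x hx => hpos x (by simp [hx])) (by omega) hkc
            (Finset.mem_sdiff.2 ⟨haA, h⟩) (fun x hx => hmin x (Finset.mem_sdiff.1 hx).1), hcs]
    rw [Finset.sum_congr rfl hstep, sum_if_mem A a haA m hm, hN]
    have hsw : switchProb α θ (m :: c) (k+1) = switchProb α θ c k := switchProb_cons α θ m c k
    rw [hsw, Finset.prod_range_succ']
    have hps : ∀ j, 1 - switchProb α θ (m :: c) (j+1) = 1 - switchProb α θ c j := by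
      intro j; rw [switchProb_cons]
    rw [Finset.prod_congr rfl (fun j _ => hps j)]
    rw [show switchProb α θ (m :: c) 0 = (m:ℝ)*θ/((m:ℝ)*θ + (c.sum:ℝ)*α) by
      simp [switchProb]]
    simp only [vsum, Nat.add_sub_cancel_left]
    rw [mul_zero, zero_add]
    linear_combination (vsum α θ c c.sum * (switchProb α θ c k
      * ∏ j ∈ Finset.range k, (1 - switchProb α θ c j))) * alg_q0 α θ hα hθ m c.sum hm

/-- given that the list of block sizes of `Π̃_n` equals the composition
`(n₁,…,n_ℓ)`, the conditional probability that `1` lies in the `k`-th block equals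
`p_k ∏_{j<k} (1 − p_j)` (with `k` 0-indexed): equivalently,
`P(sizes = c and 1 ∈ block k) = P(sizes = c) · p_k ∏_{j<k}(1 − p_j)`. -/
theorem ocrpPart_find_one (α θ : ℝ) (hα0 : 0 < α) (hα1 : α < 1) (hθ : 0 < θ)
    (n : ℕ) (hn : 1 ≤ n) (c : List ℕ) (hpos : ∀ x ∈ c, 0 < x) (hsum : c.sum = n)
    (k : ℕ) (hk : k < c.length) :
    (∑' P : {P : List (Finset ℕ) // P.map Finset.card = c ∧ 1 ∈ P.getD k ∅},
        ocrpPartLaw α θ n P.val)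
      = (∑' P : {P : List (Finset ℕ) // P.map Finset.card = c}, ocrpPartLaw α θ n P.val)
        * (switchProb α θ c k * ∏ j ∈ Finset.range k, (1 - switchProb α θ c j)) := by
  classical
  set A := Finset.Icc 1 n with hA
  have hAcard : A.card = n := by simp [hA]
  have h1A : 1 ∈ A := by simp [hA]; omega
  have hminA : ∀ x ∈ A, 1 ≤ x := fun x hx => (Finset.mem_Icc.1 hx).1
  have hneP : ∀ P ∈ parts c A, ValidP n P := by
    intro P hP
    obtain ⟨hmap, hpw, hu⟩ := (mem_parts c A P).1 hP
    refine ⟨hpw, ?_, hu⟩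
    intro B hB
    have : B.card ∈ c := by rw [← hmap]; exact List.mem_map_of_mem hB
    exact Finset.card_pos.1 (hpos _ this)
  -- the constant factor
  set D : ℝ := ∏ i ∈ Finset.range n, ((i:ℝ) + θ) with hD
  set Kc : ℝ := (c.map (fun m => ∏ i ∈ Finset.range (m-1), ((i:ℝ) + 1 - α))).prod / D with hKc
  have hlawP : ∀ P ∈ parts c A, ocrpPartLaw α θ n P = Kc * wgt α θ P := by
    intro P hP
    obtain ⟨hmap, hpw, hu⟩ := (mem_parts c A P).1 hP
    rw [law_eq α θ n P, if_pos (hneP P hP)]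
    unfold lawF
    have hmm : P.map (ascB α)
        = c.map (fun m => ∏ i ∈ Finset.range (m-1), ((i:ℝ) + 1 - α)) := by
      rw [← hmap, List.map_map]; rfl
    rw [hmm, hKc, hD]
    ring
  have hzero : ∀ (P : List (Finset ℕ)), P.map Finset.card = c → P ∉ parts c A →
      ocrpPartLaw α θ n P = 0 := by
    intro P hmap hP
    by_cases hV : ValidP n P
    · exact absurd ((mem_parts c A P).2 ⟨hmap, hV.1, hV.2.2⟩) hP
    · rw [law_eq α θ n P, if_neg hV]
  -- LHS
  have hL : (∑' P : {P : List (Finset ℕ) // P.map Finset.card = c ∧ 1 ∈ P.getD k ∅},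
      ocrpPartLaw α θ n P.val)
      = ∑ P ∈ parts c A, (if 1 ∈ P.getD k ∅ then ocrpPartLaw α θ n P else 0) := by
    rw [tsum_eq_sum (s := (parts c A).subtype
        (fun P => P.map Finset.card = c ∧ 1 ∈ P.getD k ∅)) ?h0]
    case h0 =>
      intro b hb
      rw [Finset.mem_subtype] at hb
      exact hzero b.val b.2.1 hb
    rw [Finset.sum_subtype_eq_sum_filter]
    rw [Finset.sum_filter]
    apply Finset.sum_congr rfl
    intro P hP
    have hmap := ((mem_parts c A P).1 hP).1
    by_cases h : 1 ∈ P.getD k ∅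
    · rw [if_pos ⟨hmap, h⟩, if_pos h]
    · rw [if_neg (fun hh => h hh.2), if_neg h]
  have hR : (∑' P : {P : List (Finset ℕ) // P.map Finset.card = c},
      ocrpPartLaw α θ n P.val) = ∑ P ∈ parts c A, ocrpPartLaw α θ n P := by
    rw [tsum_eq_sum (s := (parts c A).subtype (fun P => P.map Finset.card = c)) ?h0]
    case h0 =>
      intro b hb
      rw [Finset.mem_subtype] at hb
      exact hzero b.val b.2 hb
    rw [Finset.sum_subtype_eq_sum_filter]
    apply Finset.sum_congr ?heq
    · intro P hP; rfl
    · rw [Finset.filter_true_of_mem]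
      intro P hP
      exact ((mem_parts c A P).1 hP).1
  rw [hL, hR]
  have hsum' : c.sum = A.card := by rw [hAcard, hsum]
  have hLval : ∑ P ∈ parts c A, (if 1 ∈ P.getD k ∅ then ocrpPartLaw α θ n P else 0)
      = Kc * (vsum α θ c A.card
          * (switchProb α θ c k * ∏ j ∈ Finset.range k, (1 - switchProb α θ c j))) := by
    rw [← sum_wgt_parts_filter α θ hα0 hθ k c A 1 hpos hsum' hk h1A hminA, Finset.mul_sum]
    apply Finset.sum_congr rfl
    intro P hP
    by_cases h : 1 ∈ P.getD k ∅
    · rw [if_pos h, if_pos h, hlawP P hP]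
    · rw [if_neg h, if_neg h, mul_zero]
  have hRval : ∑ P ∈ parts c A, ocrpPartLaw α θ n P = Kc * vsum α θ c A.card := by
    rw [← sum_wgt_parts α θ c A hpos hsum', Finset.mul_sum]
    exact Finset.sum_congr rfl hlawP
  rw [hLval, hRval]
  ring
end

section
/- For every real 0 < α < 1 and all integers n ≥ 2 and 1 ≤ m ≤ n−1, the symmetrized splitting rules for θ = 1−α and θ = 2−α coincide: q^X(m, n−m) + q^X(n−m, m) = q^F(m, n−m) + q^F(n−m, m), where q^F(m, n−m) = C(n−1, m) · ((m + (n−1−2m)α)/(n−1)) · Γ(m−α)Γ(n−m−α)/(Γ(1−α)Γ(n−α)) and q^X(m, n−m) = C(n−1, m) · ((2m + (n−1−2m)α)/(n−1)) · Γ(m−α)Γ(n−m+1−α)/(Γ(1−α)Γ(n+1−α)); here C(a,b) is the binomial coefficient and Γ is the real Gamma function. -/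
/-- Ford's splitting rule `q^F(m, n−m) = q_{α,1−α}(n−1, m)`:
`q^F(m, n−m) = C(n−1, m) · ((m + (n−1−2m)α)/(n−1)) · Γ(m−α)Γ(n−m−α)/(Γ(1−α)Γ(n−α))`. -/
noncomputable def qFord (α : ℝ) (n m : ℕ) : ℝ :=
  ((n - 1).choose m : ℝ) * (((m : ℝ) + ((n : ℝ) - 1 - 2 * m) * α) / ((n : ℝ) - 1)) *
    (Real.Gamma ((m : ℝ) - α) * Real.Gamma ((n : ℝ) - m - α) /
      (Real.Gamma (1 - α) * Real.Gamma ((n : ℝ) - α)))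

/-- The splitting rule `q^X(m, n−m) = q_{α,2−α}(n−1, m)`:
`q^X(m, n−m) = C(n−1, m) · ((2m + (n−1−2m)α)/(n−1)) · Γ(m−α)Γ(n−m+1−α)/(Γ(1−α)Γ(n+1−α))`. -/
noncomputable def qX (α : ℝ) (n m : ℕ) : ℝ :=
  ((n - 1).choose m : ℝ) * ((2 * (m : ℝ) + ((n : ℝ) - 1 - 2 * m) * α) / ((n : ℝ) - 1)) *
    (Real.Gamma ((m : ℝ) - α) * Real.Gamma ((n : ℝ) - m + 1 - α) /
      (Real.Gamma (1 - α) * Real.Gamma ((n : ℝ) + 1 - α)))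

/-- the symmetrized splitting rules for `θ = 1−α` and `θ = 2−α` coincide:
`q^X(m, n−m) + q^X(n−m, m) = q^F(m, n−m) + q^F(n−m, m)`. -/
theorem symmetrized_splitting_rules_coincide (α : ℝ) (hα0 : 0 < α) (hα1 : α < 1)
    (n m : ℕ) (hn : 2 ≤ n) (hm1 : 1 ≤ m) (hm2 : m ≤ n - 1) :
    qX α n m + qX α n (n - m) = qFord α n m + qFord α n (n - m) := by
  have hmn : m ≤ n := le_trans hm2 (Nat.sub_le n 1)
  have hn' : (2:ℝ) ≤ (n:ℝ) := by exact_mod_cast hn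
  have hm1' : (1:ℝ) ≤ (m:ℝ) := by exact_mod_cast hm1
  have hm2' : (m:ℝ) ≤ (n:ℝ) - 1 := by
    have h : ((m:ℕ):ℝ) ≤ ((n-1:ℕ):ℝ) := by exact_mod_cast hm2
    rwa [Nat.cast_sub (by omega), Nat.cast_one] at h
  have hcast : ((n - m : ℕ) : ℝ) = (n:ℝ) - m := by
    rw [Nat.cast_sub hmn]
  have hchoose : (n-1).choose (n-m) = (n-1).choose (m-1) := by
    have h1 : m - 1 ≤ n - 1 := by omega
    have h2 : (n-1) - (m-1) = n - m := by omega
    rw [← h2, Nat.choose_symm h1]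
  have hrelN : (n-1).choose m * m = (n-1).choose (m-1) * (n - m) := by
    have h := Nat.choose_succ_right_eq (n-1) (m-1)
    have hm : m - 1 + 1 = m := by omega
    have h2 : (n-1) - (m-1) = n - m := by omega
    rw [hm, h2] at h
    exact h
  have hrel : ((n-1).choose m : ℝ) * m = ((n-1).choose (m-1) : ℝ) * ((n:ℝ) - m) := by
    have h := congrArg (Nat.cast (R := ℝ)) hrelN
    push_cast [hcast] at h
    linarith [h]
  have hNM : (0:ℝ) < (n:ℝ) - m := by linarith
  have hCm1 : ((n-1).choose (m-1) : ℝ) = ((n-1).choose m : ℝ) * m / ((n:ℝ) - m) := by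
    field_simp
    linarith [hrel]
  have hne1 : (n:ℝ) - α ≠ 0 := ne_of_gt (by linarith)
  have hne2 : (n:ℝ) - m - α ≠ 0 := ne_of_gt (by linarith)
  have hne3 : (m:ℝ) - α ≠ 0 := ne_of_gt (by linarith)
  have hG1 : Real.Gamma (1 - α) > 0 := Real.Gamma_pos_of_pos (by linarith)
  have hG2 : Real.Gamma ((n:ℝ) - α) > 0 := Real.Gamma_pos_of_pos (by linarith)
  have hG3 : Real.Gamma ((m:ℝ) - α) > 0 := Real.Gamma_pos_of_pos (by linarith)
  have hG4 : Real.Gamma ((n:ℝ) - m - α) > 0 := Real.Gamma_pos_of_pos (by linarith)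
  unfold qX qFord
  rw [hcast, hchoose, hCm1]
  have e1 : (n:ℝ) - m + 1 - α = ((n:ℝ) - m - α) + 1 := by ring
  have e2 : (n:ℝ) - ((n:ℝ) - m) + 1 - α = ((m:ℝ) - α) + 1 := by ring
  have e3 : (n:ℝ) + 1 - α = ((n:ℝ) - α) + 1 := by ring
  have e4 : (n:ℝ) - ((n:ℝ) - m) - α = (m:ℝ) - α := by ring
  rw [e1, e2, e3, e4, Real.Gamma_add_one hne1, Real.Gamma_add_one hne2,
    Real.Gamma_add_one hne3]
  have hn1 : (n:ℝ) - 1 ≠ 0 := by linarith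
  field_simp
  ring
end

section
/- For all real 0 < α < 1, θ > 0 and s > 0, the Laplace exponent of the (α, θ) spinal subordinator is given by ∫₀^∞ (1 − e^{−sx}) · ( α(1 − e^{−x})^{−α−1} e^{−(θ+1)x} + θ e^{−θx} (1 − e^{−x})^{−α} ) dx = s · Γ(s+θ) Γ(1−α) / Γ(s+θ+1−α), where Γ is the real Gamma function; in particular the integral converges. -/
open MeasureTheory Set

private lemma pointwise_eq_aux (b c : ℝ) {x : ℝ} (h0 : 0 ≤ x) (h1 : x ≤ 1) :
    (x:ℂ) ^ ((b:ℂ) - 1) * (1 - (x:ℂ)) ^ ((c:ℂ) - 1)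
      = ((x ^ (b-1) * (1-x) ^ (c-1) : ℝ) : ℂ) := by
  rw [Complex.ofReal_mul, Complex.ofReal_cpow h0, Complex.ofReal_cpow (by linarith)]
  push_cast
  ring_nf

private lemma betaReal_aux (b c : ℝ) (hb : 0 < b) (hc : 0 < c) :
    IntegrableOn (fun u : ℝ => u ^ (b-1) * (1-u) ^ (c-1)) (Set.Ioo 0 1) ∧
    ∫ u in Set.Ioo (0:ℝ) 1, u ^ (b-1) * (1-u) ^ (c-1)
      = Real.Gamma b * Real.Gamma c / Real.Gamma (b+c) := by
  have hconv := Complex.betaIntegral_convergent (u := b) (v := c) (by simpa) (by simpa)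
  have hIoc : IntegrableOn (fun x : ℝ => (x:ℂ) ^ ((b:ℂ)-1) * (1-(x:ℂ)) ^ ((c:ℂ)-1))
      (Ioc 0 1) := by
    rw [← intervalIntegrable_iff_integrableOn_Ioc_of_le zero_le_one]; exact hconv
  have hIocR : IntegrableOn (fun u : ℝ => u ^ (b-1) * (1-u) ^ (c-1)) (Ioc 0 1) :=
    (IntegrableOn.congr_fun hIoc.re (fun x hx => by
      rw [RCLike.re_to_complex, pointwise_eq_aux b c hx.1.le hx.2, Complex.ofReal_re])
      measurableSet_Ioc)
  have hint : IntegrableOn (fun u : ℝ => u ^ (b-1) * (1-u) ^ (c-1)) (Ioo 0 1) :=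
    hIocR.mono_set Ioo_subset_Ioc_self
  refine ⟨hint, ?_⟩
  have key : Complex.betaIntegral b c
      = ((∫ u in Set.Ioo (0:ℝ) 1, u ^ (b-1) * (1-u) ^ (c-1) : ℝ) : ℂ) := by
    rw [Complex.betaIntegral, intervalIntegral.integral_of_le zero_le_one]
    calc ∫ x in Ioc (0:ℝ) 1, (x:ℂ) ^ ((b:ℂ)-1) * (1-(x:ℂ)) ^ ((c:ℂ)-1)
        = ∫ x in Ioc (0:ℝ) 1, ((x ^ (b-1) * (1-x) ^ (c-1) : ℝ) : ℂ) :=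
          setIntegral_congr_fun measurableSet_Ioc (fun x hx => pointwise_eq_aux b c hx.1.le hx.2)
      _ = ((∫ x in Ioc (0:ℝ) 1, x ^ (b-1) * (1-x) ^ (c-1) : ℝ) : ℂ) := integral_ofReal
      _ = _ := by rw [integral_Ioc_eq_integral_Ioo]
  have h2 := Complex.Gamma_mul_Gamma_eq_betaIntegral (s := (b:ℂ)) (t := c) (by simpa) (by simpa)
  rw [key] at h2
  rw [← Complex.ofReal_add, Complex.Gamma_ofReal, Complex.Gamma_ofReal, Complex.Gamma_ofReal,
    ← Complex.ofReal_mul, ← Complex.ofReal_mul] at h2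
  have h2' := Complex.ofReal_injective h2
  have hΓ : Real.Gamma (b+c) ≠ 0 := (Real.Gamma_pos_of_pos (by linarith)).ne'
  field_simp
  linarith [h2']

private lemma exp_neg_image_aux : (fun x : ℝ => Real.exp (-x)) '' Ioi 0 = Ioo 0 1 := by
  ext u
  constructor
  · rintro ⟨x, hx, rfl⟩
    exact ⟨Real.exp_pos _, by rw [Real.exp_lt_one_iff]; linarith [mem_Ioi.mp hx]⟩
  · rintro ⟨h0, h1⟩
    exact ⟨-Real.log u, by simpa using Real.log_neg h0 h1, by simp [Real.exp_log h0]⟩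

private lemma exp_neg_deriv_aux : ∀ x ∈ Ioi (0:ℝ),
    HasDerivWithinAt (fun x : ℝ => Real.exp (-x)) (-Real.exp (-x)) (Ioi 0) x := by
  intro x _
  simpa [Function.comp_def] using ((Real.hasDerivAt_exp (-x)).comp x (hasDerivAt_neg x)).hasDerivWithinAt

private lemma exp_neg_inj_aux : InjOn (fun x : ℝ => Real.exp (-x)) (Ioi 0) :=
  fun a _ b _ h => by have := Real.exp_injective h; linarith

private lemma exp_smul_eq_aux (b c x : ℝ) :
    |(-Real.exp (-x))| • ((Real.exp (-x)) ^ (b-1) * (1 - Real.exp (-x)) ^ (c-1))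
      = Real.exp (-(b*x)) * (1 - Real.exp (-x)) ^ (c-1) := by
  rw [abs_neg, abs_of_pos (Real.exp_pos _), smul_eq_mul,
    Real.rpow_def_of_pos (Real.exp_pos _), Real.log_exp, ← mul_assoc, ← Real.exp_add]
  ring_nf

/-- Exponential form of the Beta integral:
`∫₀^∞ e^{-bx} (1-e^{-x})^{c-1} dx = Γ(b)Γ(c)/Γ(b+c)`. -/
private lemma expBeta (b c : ℝ) (hb : 0 < b) (hc : 0 < c) :
    IntegrableOn (fun x : ℝ => Real.exp (-(b*x)) * (1 - Real.exp (-x)) ^ (c-1)) (Ioi 0) ∧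
    ∫ x in Ioi (0:ℝ), Real.exp (-(b*x)) * (1 - Real.exp (-x)) ^ (c-1)
      = Real.Gamma b * Real.Gamma c / Real.Gamma (b+c) := by
  obtain ⟨hint, hval⟩ := betaReal_aux b c hb hc
  have hiff := integrableOn_image_iff_integrableOn_abs_deriv_smul measurableSet_Ioi
    exp_neg_deriv_aux exp_neg_inj_aux (fun u : ℝ => u ^ (b-1) * (1-u) ^ (c-1))
  rw [exp_neg_image_aux] at hiff
  have heq := integral_image_eq_integral_abs_deriv_smul measurableSet_Ioi
    exp_neg_deriv_aux exp_neg_inj_aux (fun u : ℝ => u ^ (b-1) * (1-u) ^ (c-1))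
  rw [exp_neg_image_aux] at heq
  simp only [exp_smul_eq_aux b c] at hiff heq
  exact ⟨hiff.mp hint, by rw [← heq, hval]⟩

/-- Bernoulli-type bound: `1 - e^{-sx} ≤ max s 1 · (1 - e^{-x})` for `x ≥ 0`. -/
private lemma one_sub_exp_mul_le (s x : ℝ) (hs : 0 < s) (hx : 0 ≤ x) :
    1 - Real.exp (-(s*x)) ≤ max s 1 * (1 - Real.exp (-x)) := by
  have hx1 : Real.exp (-x) ≤ 1 := Real.exp_le_one_iff.mpr (by linarith)
  rcases le_total s 1 with h | h
  · have h1 : Real.exp (-x) ≤ Real.exp (-(s*x)) := Real.exp_le_exp.mpr (by nlinarith)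
    have hM : 1 ≤ max s 1 := le_max_right s 1
    nlinarith
  · have hM : max s 1 = s := max_eq_left h
    have hb := one_add_mul_self_le_rpow_one_add (s := -(1 - Real.exp (-x)))
      (by nlinarith [Real.exp_pos (-x)]) h
    have he : (1 + -(1 - Real.exp (-x))) ^ s = Real.exp (-(s*x)) := by
      have : (1 + -(1 - Real.exp (-x))) = Real.exp (-x) := by ring
      rw [this, Real.rpow_def_of_pos (Real.exp_pos _), Real.log_exp]
      ring_nf
    rw [he] at hb
    nlinarith

/-- the Laplace exponent of the `(α, θ)` spinal subordinator:
`∫₀^∞ (1 − e^{−sx}) λ_{α,θ}(x) dx = s Γ(s+θ) Γ(1−α) / Γ(s+θ+1−α)`, where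
`λ_{α,θ}(x) = α(1 − e^{−x})^{−α−1} e^{−(θ+1)x} + θ e^{−θx} (1 − e^{−x})^{−α}`;
in particular the integral converges. -/
theorem laplace_exponent_alpha_theta (α θ s : ℝ) (hα0 : 0 < α) (hα1 : α < 1)
    (hθ : 0 < θ) (hs : 0 < s) :
    IntegrableOn (fun x : ℝ => (1 - Real.exp (-s * x)) *
        (α * (1 - Real.exp (-x)) ^ (-α - 1) * Real.exp (-(θ + 1) * x)
          + θ * Real.exp (-θ * x) * (1 - Real.exp (-x)) ^ (-α))) (Set.Ioi 0)
      ∧ ∫ x in Set.Ioi (0 : ℝ), (1 - Real.exp (-s * x)) *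
          (α * (1 - Real.exp (-x)) ^ (-α - 1) * Real.exp (-(θ + 1) * x)
            + θ * Real.exp (-θ * x) * (1 - Real.exp (-x)) ^ (-α))
        = s * Real.Gamma (s + θ) * Real.Gamma (1 - α) / Real.Gamma (s + θ + 1 - α) := by
  have h1α : 0 < 1 - α := by linarith
  have h2α : 0 < 2 - α := by linarith
  -- Part 1: integrability of the integrand
  have hBint : IntegrableOn (fun x : ℝ => max s 1 *
      (α * (Real.exp (-((θ+1)*x)) * (1 - Real.exp (-x)) ^ ((1-α)-1))
        + θ * (Real.exp (-(θ*x)) * (1 - Real.exp (-x)) ^ ((2-α)-1)))) (Ioi 0) :=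
    ((((expBeta (θ+1) (1-α) (by linarith) h1α).1.const_mul α).add
      ((expBeta θ (2-α) hθ h2α).1.const_mul θ)).const_mul _)
  have hne : ∀ x ∈ Ioi (0:ℝ), 1 - Real.exp (-x) ≠ 0 := by
    intro x hx
    have : Real.exp (-x) < 1 := Real.exp_lt_one_iff.mpr (by simpa using mem_Ioi.mp hx)
    linarith
  have hc1 : ContinuousOn (fun x : ℝ => 1 - Real.exp (-x)) (Ioi 0) := by fun_prop
  have hcont : ContinuousOn (fun x : ℝ => (1 - Real.exp (-s * x)) *
      (α * (1 - Real.exp (-x)) ^ (-α - 1) * Real.exp (-(θ + 1) * x)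
        + θ * Real.exp (-θ * x) * (1 - Real.exp (-x)) ^ (-α))) (Ioi 0) := by
    refine ContinuousOn.mul (by fun_prop) (ContinuousOn.add ?_ ?_)
    · exact (continuousOn_const.mul (hc1.rpow_const fun x hx => Or.inl (hne x hx))).mul
        (by fun_prop)
    · exact (continuousOn_const.mul (by fun_prop)).mul
        (hc1.rpow_const fun x hx => Or.inl (hne x hx))
  have hF_int : IntegrableOn (fun x : ℝ => (1 - Real.exp (-s * x)) *
      (α * (1 - Real.exp (-x)) ^ (-α - 1) * Real.exp (-(θ + 1) * x)
        + θ * Real.exp (-θ * x) * (1 - Real.exp (-x)) ^ (-α))) (Set.Ioi 0) := by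
    refine Integrable.mono' hBint (hcont.aestronglyMeasurable measurableSet_Ioi) ?_
    rw [ae_restrict_iff' measurableSet_Ioi]
    filter_upwards with x hx
    have hx0 : (0:ℝ) < x := mem_Ioi.mp hx
    have ht : 0 < 1 - Real.exp (-x) := by
      have : Real.exp (-x) < 1 := Real.exp_lt_one_iff.mpr (by linarith)
      linarith
    have h1 : 0 ≤ 1 - Real.exp (-s*x) := by
      have : Real.exp (-s*x) ≤ 1 := Real.exp_le_one_iff.mpr (by nlinarith)
      linarith
    have h2 : 0 ≤ α * (1 - Real.exp (-x)) ^ (-α - 1) * Real.exp (-(θ + 1) * x)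
        + θ * Real.exp (-θ * x) * (1 - Real.exp (-x)) ^ (-α) := by
      have r1 := Real.rpow_nonneg ht.le (-α - 1)
      have r2 := Real.rpow_nonneg ht.le (-α)
      exact add_nonneg (mul_nonneg (mul_nonneg hα0.le r1) (Real.exp_nonneg _))
        (mul_nonneg (mul_nonneg hθ.le (Real.exp_nonneg _)) r2)
    rw [Real.norm_eq_abs, abs_of_nonneg (mul_nonneg h1 h2)]
    have hkey : 1 - Real.exp (-s*x) ≤ max s 1 * (1 - Real.exp (-x)) := by
      simpa [neg_mul] using one_sub_exp_mul_le s x hs hx0.le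
    calc (1 - Real.exp (-s*x)) * _ ≤ (max s 1 * (1 - Real.exp (-x))) *
          (α * (1 - Real.exp (-x)) ^ (-α - 1) * Real.exp (-(θ + 1) * x)
            + θ * Real.exp (-θ * x) * (1 - Real.exp (-x)) ^ (-α)) :=
        mul_le_mul_of_nonneg_right hkey h2
      _ = _ := by
        have e1 : (1 - Real.exp (-x)) ^ ((1-α)-1)
            = (1 - Real.exp (-x)) ^ (-α - 1) * (1 - Real.exp (-x)) := by
          rw [← Real.rpow_add_one ht.ne' (-α - 1)]
          congr 1; ring
        have e2 : (1 - Real.exp (-x)) ^ ((2-α)-1)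
            = (1 - Real.exp (-x)) ^ (-α) * (1 - Real.exp (-x)) := by
          rw [← Real.rpow_add_one ht.ne' (-α)]
          congr 1; ring
        have e3 : Real.exp (-((θ+1)*x)) = Real.exp (-(θ+1)*x) := by ring_nf
        have e4 : Real.exp (-(θ*x)) = Real.exp (-θ*x) := by ring_nf
        rw [e1, e2, e3, e4]
        ring
  refine ⟨hF_int, ?_⟩
  -- Part 2: the value, via FTC on `(0, ∞)` applied to
  -- `h(x) = (1 - e^{-sx}) e^{-θx} (1-e^{-x})^{-α}`.
  obtain ⟨hφ0int, hφ0val⟩ := expBeta (s+θ) (1-α) (by linarith) h1α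
  have hfun : (fun x : ℝ => s * (Real.exp (-((s+θ)*x)) * (1 - Real.exp (-x)) ^ ((1-α)-1)))
      = (fun x : ℝ => s * Real.exp (-s*x) * (Real.exp (-θ*x) * (1 - Real.exp (-x)) ^ (-α))) := by
    funext x
    rw [show -((s+θ)*x) = -s*x + -θ*x by ring, Real.exp_add, show (1:ℝ)-α-1 = -α by ring]
    ring
  have hφint : IntegrableOn
      (fun x : ℝ => s * Real.exp (-s*x) * (Real.exp (-θ*x) * (1 - Real.exp (-x)) ^ (-α)))
      (Ioi 0) := by
    have := hφ0int.const_mul s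
    rwa [hfun] at this
  have hφval : ∫ x in Ioi (0:ℝ),
        s * Real.exp (-s*x) * (Real.exp (-θ*x) * (1 - Real.exp (-x)) ^ (-α))
      = s * Real.Gamma (s+θ) * Real.Gamma (1-α) / Real.Gamma (s+θ+1-α) := by
    rw [← hfun, MeasureTheory.integral_const_mul, hφ0val, show s+θ+(1-α) = s+θ+1-α by ring]
    ring
  -- the derivative
  have hderiv : ∀ x ∈ Ioi (0:ℝ), HasDerivAt
      (fun y => (1 - Real.exp (-s*y)) * (Real.exp (-θ*y) * (1 - Real.exp (-y)) ^ (-α)))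
      (s * Real.exp (-s*x) * (Real.exp (-θ*x) * (1 - Real.exp (-x)) ^ (-α))
        - (1 - Real.exp (-s * x)) *
          (α * (1 - Real.exp (-x)) ^ (-α - 1) * Real.exp (-(θ + 1) * x)
            + θ * Real.exp (-θ * x) * (1 - Real.exp (-x)) ^ (-α))) x := by
    intro x hx
    have hx0 : (0:ℝ) < x := mem_Ioi.mp hx
    have ht : 0 < 1 - Real.exp (-x) := by
      have : Real.exp (-x) < 1 := Real.exp_lt_one_iff.mpr (by linarith)
      linarith
    have d1 : HasDerivAt (fun y : ℝ => Real.exp (-y)) (-Real.exp (-x)) x := by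
      simpa [Function.comp_def] using (Real.hasDerivAt_exp (-x)).comp x (hasDerivAt_neg x)
    have d2 : HasDerivAt (fun y : ℝ => 1 - Real.exp (-y)) (Real.exp (-x)) x := by
      simpa [Pi.sub_def] using (hasDerivAt_const x (1:ℝ)).sub d1
    have d3 : HasDerivAt (fun y : ℝ => (1 - Real.exp (-y)) ^ (-α))
        ((-α) * (1 - Real.exp (-x)) ^ (-α - 1) * Real.exp (-x)) x := by
      have := (Real.hasDerivAt_rpow_const (x := 1 - Real.exp (-x)) (p := -α)
        (Or.inl ht.ne')).comp x d2
      simpa [mul_assoc, Function.comp_def] using this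
    have d4 : HasDerivAt (fun y : ℝ => Real.exp (-θ*y)) (-θ * Real.exp (-θ*x)) x := by
      have h0 : HasDerivAt (fun y : ℝ => -θ*y) (-θ) x := by
        simpa using (hasDerivAt_id x).const_mul (-θ)
      simpa [Function.comp_def, mul_comm] using (Real.hasDerivAt_exp (-θ*x)).comp x h0
    have d5 := d4.mul d3
    have d6 : HasDerivAt (fun y : ℝ => 1 - Real.exp (-s*y)) (s * Real.exp (-s*x)) x := by
      have h0 : HasDerivAt (fun y : ℝ => -s*y) (-s) x := by
        simpa using (hasDerivAt_id x).const_mul (-s)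
      have := (hasDerivAt_const x (1:ℝ)).sub ((Real.hasDerivAt_exp (-s*x)).comp x h0)
      simpa [Function.comp_def, mul_comm, Pi.sub_def] using this
    have dh := d6.mul d5
    refine dh.congr_deriv ?_
    have e3 : Real.exp (-(θ+1)*x) = Real.exp (-θ*x) * Real.exp (-x) := by
      rw [← Real.exp_add]; ring_nf
    simp only [Pi.mul_apply]
    rw [e3]
    ring
  -- continuity at 0 from the right
  have hcont0 : ContinuousWithinAt
      (fun y => (1 - Real.exp (-s*y)) * (Real.exp (-θ*y) * (1 - Real.exp (-y)) ^ (-α)))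
      (Ici 0) 0 := by
    have h00 : (1 - Real.exp (-s*0)) * (Real.exp (-θ*0) * (1 - Real.exp (-0)) ^ (-α)) = 0 := by
      simp
    rw [ContinuousWithinAt, h00]
    have hU : Filter.Tendsto
        (fun x : ℝ => max s 1 * (Real.exp (-θ*x) * (1 - Real.exp (-x)) ^ (1-α)))
        (nhdsWithin 0 (Ici 0)) (nhds 0) := by
      have hbase : ContinuousAt (fun x : ℝ => 1 - Real.exp (-x)) 0 := by fun_prop
      have hrpow : ContinuousAt (fun x : ℝ => (1 - Real.exp (-x)) ^ (1-α)) 0 :=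
        hbase.rpow_const (Or.inr (by linarith))
      have hca : ContinuousAt (fun x : ℝ =>
          max s 1 * (Real.exp (-θ*x) * (1 - Real.exp (-x)) ^ (1-α))) 0 :=
        (continuousAt_const.mul ((by fun_prop : ContinuousAt
          (fun x : ℝ => Real.exp (-θ*x)) 0).mul hrpow))
      have hval : max s 1 * (Real.exp (-θ*0) * (1 - Real.exp (-(0:ℝ))) ^ (1-α)) = 0 := by
        rw [show (1 : ℝ) - Real.exp (-(0:ℝ)) = 0 by simp, Real.zero_rpow (by linarith)]
        simp
      have := hca.tendsto.mono_left (nhdsWithin_le_nhds (s := Ici (0:ℝ)))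
      rwa [hval] at this
    refine squeeze_zero' ?_ ?_ hU
    · filter_upwards [self_mem_nhdsWithin] with x hx
      have hx0 : (0:ℝ) ≤ x := hx
      have ht : 0 ≤ 1 - Real.exp (-x) := by
        have : Real.exp (-x) ≤ 1 := Real.exp_le_one_iff.mpr (by linarith)
        linarith
      have h1 : 0 ≤ 1 - Real.exp (-s*x) := by
        have : Real.exp (-s*x) ≤ 1 := Real.exp_le_one_iff.mpr (by nlinarith)
        linarith
      exact mul_nonneg h1 (mul_nonneg (Real.exp_nonneg _) (Real.rpow_nonneg ht _))
    · filter_upwards [self_mem_nhdsWithin] with x hx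
      have hx0 : (0:ℝ) ≤ x := hx
      have ht : 0 ≤ 1 - Real.exp (-x) := by
        have : Real.exp (-x) ≤ 1 := Real.exp_le_one_iff.mpr (by linarith)
        linarith
      have hkey : 1 - Real.exp (-s*x) ≤ max s 1 * (1 - Real.exp (-x)) := by
        simpa [neg_mul] using one_sub_exp_mul_le s x hs hx0
      have hrw : (1 - Real.exp (-x)) ^ (1-α)
          = (1 - Real.exp (-x)) * (1 - Real.exp (-x)) ^ (-α) := by
        rcases eq_or_lt_of_le ht with h | h
        · rw [← h, Real.zero_rpow (by linarith), Real.zero_rpow (by linarith), mul_zero]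
        · rw [show (1:ℝ)-α = -α+1 by ring, Real.rpow_add_one h.ne', mul_comm]
      rw [hrw]
      have h2 : 0 ≤ Real.exp (-θ*x) * ((1 - Real.exp (-x)) ^ (-α)) :=
        mul_nonneg (Real.exp_nonneg _) (Real.rpow_nonneg ht _)
      calc (1 - Real.exp (-s*x)) * (Real.exp (-θ*x) * (1 - Real.exp (-x)) ^ (-α))
          ≤ (max s 1 * (1 - Real.exp (-x))) *
              (Real.exp (-θ*x) * (1 - Real.exp (-x)) ^ (-α)) :=
            mul_le_mul_of_nonneg_right hkey h2
        _ = _ := by ring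
  -- limit 0 at infinity
  have htop : Filter.Tendsto
      (fun y => (1 - Real.exp (-s*y)) * (Real.exp (-θ*y) * (1 - Real.exp (-y)) ^ (-α)))
      Filter.atTop (nhds 0) := by
    set C : ℝ := (1 - Real.exp (-1)) ^ (-α) with hC
    have hUt : Filter.Tendsto (fun x : ℝ => C * Real.exp (-θ*x)) Filter.atTop (nhds 0) := by
      have h1 : Filter.Tendsto (fun x : ℝ => -θ*x) Filter.atTop Filter.atBot := by
        have := (Filter.tendsto_id (α := ℝ) (x := Filter.atTop)).const_mul_atTop hθ
        simpa [Function.comp_def, neg_mul] using Filter.tendsto_neg_atTop_atBot.comp this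
      have h2 : Filter.Tendsto (fun x : ℝ => Real.exp (-θ*x)) Filter.atTop (nhds 0) :=
        Real.tendsto_exp_atBot.comp h1
      simpa using h2.const_mul C
    refine squeeze_zero' ?_ ?_ hUt
    · filter_upwards [Filter.eventually_ge_atTop (0:ℝ)] with x hx0
      have ht : 0 ≤ 1 - Real.exp (-x) := by
        have : Real.exp (-x) ≤ 1 := Real.exp_le_one_iff.mpr (by linarith)
        linarith
      have h1 : 0 ≤ 1 - Real.exp (-s*x) := by
        have : Real.exp (-s*x) ≤ 1 := Real.exp_le_one_iff.mpr (by nlinarith)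
        linarith
      exact mul_nonneg h1 (mul_nonneg (Real.exp_nonneg _) (Real.rpow_nonneg ht _))
    · filter_upwards [Filter.eventually_ge_atTop (1:ℝ)] with x hx1
      have he1 : 0 < 1 - Real.exp (-1:ℝ) := by
        have : Real.exp (-1:ℝ) < 1 := Real.exp_lt_one_iff.mpr (by norm_num)
        linarith
      have hle : 1 - Real.exp (-1:ℝ) ≤ 1 - Real.exp (-x) := by
        have : Real.exp (-x) ≤ Real.exp (-1:ℝ) := Real.exp_le_exp.mpr (by linarith)
        linarith
      have hr : (1 - Real.exp (-x)) ^ (-α) ≤ C :=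
        Real.rpow_le_rpow_of_nonpos he1 hle (by linarith)
      have h1 : 1 - Real.exp (-s*x) ≤ 1 := by
        have := Real.exp_nonneg (-s*x); linarith
      have ht : 0 ≤ 1 - Real.exp (-x) := by
        have : Real.exp (-x) ≤ 1 := Real.exp_le_one_iff.mpr (by nlinarith)
        linarith
      calc (1 - Real.exp (-s*x)) * (Real.exp (-θ*x) * (1 - Real.exp (-x)) ^ (-α))
          ≤ 1 * (Real.exp (-θ*x) * (1 - Real.exp (-x)) ^ (-α)) :=
            mul_le_mul_of_nonneg_right h1
              (mul_nonneg (Real.exp_nonneg _) (Real.rpow_nonneg ht _))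
        _ = Real.exp (-θ*x) * (1 - Real.exp (-x)) ^ (-α) := one_mul _
        _ ≤ Real.exp (-θ*x) * C :=
            mul_le_mul_of_nonneg_left hr (Real.exp_nonneg _)
        _ = C * Real.exp (-θ*x) := mul_comm _ _
  -- conclusion: FTC
  have h'int : IntegrableOn (fun x : ℝ =>
      s * Real.exp (-s*x) * (Real.exp (-θ*x) * (1 - Real.exp (-x)) ^ (-α))
        - (1 - Real.exp (-s * x)) *
          (α * (1 - Real.exp (-x)) ^ (-α - 1) * Real.exp (-(θ + 1) * x)
            + θ * Real.exp (-θ * x) * (1 - Real.exp (-x)) ^ (-α))) (Ioi 0) :=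
    hφint.sub hF_int
  have hFTC := integral_Ioi_of_hasDerivAt_of_tendsto hcont0 hderiv h'int htop
  rw [integral_sub hφint hF_int] at hFTC
  have hh0 : (1 - Real.exp (-s*(0:ℝ))) *
      (Real.exp (-θ*(0:ℝ)) * (1 - Real.exp (-(0:ℝ))) ^ (-α)) = 0 := by simp
  rw [hh0, hφval, zero_sub, neg_zero] at hFTC
  linarith [hFTC]
end

section
/- For all real 0 < α < 1 and s > 0, ∫₀¹ (1 − u^s) · α (1−u)^{−α−1} du = Γ(s+1)Γ(1−α)/Γ(s+1−α) − 1, where Γ is the real Gamma function; in particular the integral converges. (Together with a unit killing rate, this identifies the Laplace exponent Φ_{α,0}(s) = Γ(s+1)Γ(1−α)/Γ(s+1−α) of the (α, 0) case.) -/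
open MeasureTheory Set Filter Topology

lemma beta_eqOn (p q : ℝ) :
    Set.EqOn (fun x : ℝ => (x : ℂ) ^ ((p : ℂ) - 1) * (1 - (x : ℂ)) ^ ((q : ℂ) - 1))
      (fun x : ℝ => ((x ^ (p - 1) * (1 - x) ^ (q - 1) : ℝ) : ℂ)) (Set.Ioo 0 1) := by
  intro x hx
  simp only
  rw [Complex.ofReal_mul, Complex.ofReal_cpow hx.1.le,
    Complex.ofReal_cpow (by linarith [hx.2] : (0:ℝ) ≤ 1 - x)]
  push_cast
  ring

lemma real_beta (p q : ℝ) (hp : 0 < p) (hq : 0 < q) :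
    IntegrableOn (fun x : ℝ => x ^ (p - 1) * (1 - x) ^ (q - 1)) (Set.Ioo 0 1) ∧
    ∫ x in Set.Ioo (0:ℝ) 1, x ^ (p - 1) * (1 - x) ^ (q - 1)
      = Real.Gamma p * Real.Gamma q / Real.Gamma (p + q) := by
  have hc : IntervalIntegrable
      (fun x : ℝ => (x : ℂ) ^ ((p : ℂ) - 1) * (1 - (x : ℂ)) ^ ((q : ℂ) - 1)) volume 0 1 :=
    Complex.betaIntegral_convergent (by simpa using hp) (by simpa using hq)
  have hcIoo : IntegrableOn
      (fun x : ℝ => (x : ℂ) ^ ((p : ℂ) - 1) * (1 - (x : ℂ)) ^ ((q : ℂ) - 1)) (Set.Ioo 0 1) :=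
    ((intervalIntegrable_iff_integrableOn_Ioc_of_le zero_le_one).mp hc).mono_set
      Set.Ioo_subset_Ioc_self
  have hint : IntegrableOn (fun x : ℝ => x ^ (p - 1) * (1 - x) ^ (q - 1)) (Set.Ioo 0 1) := by
    have h1 : IntegrableOn (fun x : ℝ => RCLike.re ((x ^ (p - 1) * (1 - x) ^ (q - 1) : ℝ) : ℂ))
        (Set.Ioo 0 1) := (hcIoo.congr_fun (beta_eqOn p q) measurableSet_Ioo).re
    refine IntegrableOn.congr_fun h1 (fun x _ => ?_) measurableSet_Ioo
    simp
  refine ⟨hint, ?_⟩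
  have hB : Complex.betaIntegral p q
      = ((∫ x in Set.Ioo (0:ℝ) 1, x ^ (p - 1) * (1 - x) ^ (q - 1) : ℝ) : ℂ) := by
    rw [Complex.betaIntegral, intervalIntegral.integral_of_le zero_le_one,
      MeasureTheory.integral_Ioc_eq_integral_Ioo,
      setIntegral_congr_fun measurableSet_Ioo (beta_eqOn p q)]
    exact integral_ofReal
  have hG := Complex.Gamma_mul_Gamma_eq_betaIntegral (s := (p : ℂ)) (t := (q : ℂ))
    (by simpa using hp) (by simpa using hq)
  rw [hB] at hG
  have hne : Real.Gamma (p + q) ≠ 0 := (Real.Gamma_pos_of_pos (by positivity)).ne'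
  rw [eq_div_iff hne]
  have h2 : ((∫ x in Set.Ioo (0:ℝ) 1, x ^ (p - 1) * (1 - x) ^ (q - 1)) * Real.Gamma (p + q) : ℂ)
      = ((Real.Gamma p * Real.Gamma q : ℝ) : ℂ) := by
    push_cast [← Complex.Gamma_ofReal]
    rw [hG]
    ring
  exact_mod_cast h2

lemma key_ineq (s x : ℝ) (hs : 0 < s) (hx : x ∈ Set.Ioo (0:ℝ) 1) :
    1 - x ^ s ≤ max 1 s * (1 - x) := by
  rcases le_total s 1 with h | h
  · have h1 : x ^ (1:ℝ) ≤ x ^ s := Real.rpow_le_rpow_of_exponent_ge hx.1 hx.2.le h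
    rw [Real.rpow_one] at h1
    have : (1:ℝ) ≤ max 1 s := le_max_left _ _
    nlinarith [hx.1, hx.2]
  · have hb := one_add_mul_self_le_rpow_one_add (by linarith [hx.1] : (-1:ℝ) ≤ x - 1) h
    have : s ≤ max 1 s := le_max_right _ _
    have hx1 : (0:ℝ) ≤ 1 - x := by linarith [hx.2]
    have : 1 + s * (x - 1) ≤ x ^ s := by
      simpa using hb
    nlinarith

/-- `∫₀¹ (1 − u^s) α (1−u)^{−α−1} du = Γ(s+1)Γ(1−α)/Γ(s+1−α) − 1`;
in particular the integral converges. -/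
theorem laplace_exponent_alpha_zero (α s : ℝ) (hα0 : 0 < α) (hα1 : α < 1) (hs : 0 < s) :
    IntegrableOn (fun u : ℝ => (1 - u ^ s) * (α * (1 - u) ^ (-α - 1))) (Set.Ioo 0 1)
      ∧ ∫ u in Set.Ioo (0 : ℝ) 1, (1 - u ^ s) * (α * (1 - u) ^ (-α - 1))
        = Real.Gamma (s + 1) * Real.Gamma (1 - α) / Real.Gamma (s + 1 - α) - 1 := by
  set f : ℝ → ℝ := fun u => (1 - u ^ s) * (α * (1 - u) ^ (-α - 1)) with hf_def
  set g : ℝ → ℝ := fun u => s * u ^ (s - 1) * (1 - u) ^ (-α) with hg_def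
  set F : ℝ → ℝ := fun u => (1 - u ^ s) * (1 - u) ^ (-α) with hF_def
  obtain ⟨hbi, hbv⟩ := real_beta s (1 - α) hs (by linarith)
  simp only [show (1:ℝ) - α - 1 = -α from by ring] at hbi hbv
  obtain ⟨hbi1, _⟩ := real_beta 1 (1 - α) one_pos (by linarith)
  simp only [sub_self, Real.rpow_zero, one_mul,
    show (1:ℝ) - α - 1 = -α from by ring] at hbi1
  -- hbi1 : IntegrableOn (fun x => (1-x)^(-α)) (Ioo 0 1)
  -- Integrability of g
  have hgi : IntegrableOn g (Set.Ioo 0 1) := by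
    have h1 : IntegrableOn (fun x : ℝ => s * (x ^ (s - 1) * (1 - x) ^ (-α))) (Set.Ioo 0 1) :=
      hbi.const_mul s
    refine IntegrableOn.congr_fun h1 (fun x _ => ?_) measurableSet_Ioo
    simp [hg_def, mul_assoc]
  -- Integrability of f
  have hcont : ContinuousOn f (Set.Ioo 0 1) := by
    apply ContinuousOn.mul
    · exact continuousOn_const.sub (continuousOn_id.rpow_const fun x hx => Or.inl hx.1.ne')
    · exact continuousOn_const.mul ((continuousOn_const.sub continuousOn_id).rpow_const
        fun x hx => Or.inl (sub_pos.mpr hx.2).ne')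
  have hf_int : IntegrableOn f (Set.Ioo 0 1) := by
    refine Integrable.mono' ((hbi1.const_mul (α * max 1 s))) 
      (hcont.aestronglyMeasurable measurableSet_Ioo) ?_
    filter_upwards [ae_restrict_mem measurableSet_Ioo] with x hx
    have hx1 : 0 < 1 - x := by linarith [hx.2]
    have hxs : x ^ s ≤ 1 := Real.rpow_le_one hx.1.le hx.2.le hs.le
    have hpos : 0 ≤ f x := by
      have := Real.rpow_nonneg hx1.le (-α - 1)
      have : (0:ℝ) ≤ α * (1 - x) ^ (-α - 1) := by positivity
      simp only [hf_def]
      nlinarith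
    rw [Real.norm_eq_abs, abs_of_nonneg hpos]
    have key := key_ineq s x hs hx
    calc f x = (1 - x ^ s) * α * (1 - x) ^ (-α - 1) := by simp only [hf_def]; ring
      _ ≤ (max 1 s * (1 - x)) * α * (1 - x) ^ (-α - 1) := by
          apply mul_le_mul_of_nonneg_right (mul_le_mul_of_nonneg_right key hα0.le)
            (Real.rpow_nonneg hx1.le _)
      _ = α * max 1 s * ((1 - x) ^ (1:ℝ) * (1 - x) ^ (-α - 1)) := by
          rw [Real.rpow_one]; ring
      _ = α * max 1 s * (1 - x) ^ (-α) := by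
          rw [← Real.rpow_add hx1]; ring_nf
  -- Derivative
  have hderiv : ∀ x ∈ Set.Ioo (0:ℝ) 1, HasDerivAt F (f x - g x) x := by
    intro x hx
    have hx1 : 0 < 1 - x := by linarith [hx.2]
    have h1 : HasDerivAt (fun u : ℝ => u ^ s) (s * x ^ (s - 1)) x :=
      Real.hasDerivAt_rpow_const (Or.inl hx.1.ne')
    have h1' : HasDerivAt (fun u : ℝ => 1 - u ^ s) (-(s * x ^ (s - 1))) x := h1.const_sub 1
    have hb : HasDerivAt (fun u : ℝ => 1 - u) (-1) x := (hasDerivAt_id x).const_sub 1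
    have hr : HasDerivAt (fun y : ℝ => y ^ (-α)) (-α * (1 - x) ^ (-α - 1)) (1 - x) :=
      Real.hasDerivAt_rpow_const (Or.inl hx1.ne')
    have h2 : HasDerivAt (fun u : ℝ => (1 - u) ^ (-α)) (α * (1 - x) ^ (-α - 1)) x := by
      have := hr.comp x hb
      exact this.congr_deriv (by ring)
    have := h1'.mul h2
    exact this.congr_deriv (by simp only [hf_def, hg_def]; ring)
  -- Interval integrability of f - g
  have hfg : IntegrableOn (fun x => f x - g x) (Set.Ioo 0 1) := hf_int.sub hgi
  have hfg' : IntervalIntegrable (fun x => f x - g x) volume 0 1 := by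
    rw [intervalIntegrable_iff_integrableOn_Ioc_of_le zero_le_one]
    exact hfg.congr_set_ae Ioo_ae_eq_Ioc.symm
  -- Limit at 0
  have hFa : Tendsto F (𝓝[>] (0:ℝ)) (𝓝 1) := by
    have hc1 : ContinuousAt (fun u : ℝ => u ^ s) 0 :=
      Real.continuousAt_rpow_const 0 s (Or.inr hs.le)
    have hc2 : ContinuousAt (fun u : ℝ => (1 - u) ^ (-α)) 0 :=
      (continuousAt_const.sub continuousAt_id).rpow_const (Or.inl (by norm_num))
    have hcF : ContinuousAt F 0 := (continuousAt_const.sub hc1).mul hc2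
    have : F 0 = 1 := by
      simp [hF_def, Real.zero_rpow hs.ne', Real.one_rpow]
    rw [← this]
    exact hcF.continuousWithinAt
  -- Limit at 1
  have hFb : Tendsto F (𝓝[<] (1:ℝ)) (𝓝 0) := by
    have hup : Tendsto (fun u : ℝ => max 1 s * (1 - u) ^ (1 - α)) (𝓝[<] (1:ℝ)) (𝓝 0) := by
      have hc : ContinuousAt (fun u : ℝ => (1 - u) ^ (1 - α)) 1 :=
        (continuousAt_const.sub continuousAt_id).rpow_const (Or.inr (by linarith))
      have hv : (fun u : ℝ => (1 - u) ^ (1 - α)) 1 = 0 := by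
        simp [Real.zero_rpow (by linarith : (1:ℝ) - α ≠ 0)]
      have := (hc.continuousWithinAt (s := Set.Iio 1)).const_mul (max 1 s)
      rw [ContinuousWithinAt, show ((1:ℝ) - 1) ^ (1 - α) = 0 from hv, mul_zero] at this
      exact this
    apply squeeze_zero' ?_ ?_ hup
    · filter_upwards [Ioo_mem_nhdsLT_of_mem (by norm_num : (1:ℝ) ∈ Set.Ioc 0 1)] with x hx
      have hx1 : 0 < 1 - x := by linarith [hx.2]
      have hxs : x ^ s ≤ 1 := Real.rpow_le_one hx.1.le hx.2.le hs.le
      have := Real.rpow_nonneg hx1.le (-α)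
      simp only [hF_def]
      nlinarith
    · filter_upwards [Ioo_mem_nhdsLT_of_mem (by norm_num : (1:ℝ) ∈ Set.Ioc 0 1)] with x hx
      have hx1 : 0 < 1 - x := by linarith [hx.2]
      have key := key_ineq s x hs hx
      calc F x ≤ (max 1 s * (1 - x)) * (1 - x) ^ (-α) := by
            simp only [hF_def]
            exact mul_le_mul_of_nonneg_right key (Real.rpow_nonneg hx1.le _)
        _ = max 1 s * ((1 - x) ^ (1:ℝ) * (1 - x) ^ (-α)) := by rw [Real.rpow_one]; ring
        _ = max 1 s * (1 - x) ^ (1 - α) := by rw [← Real.rpow_add hx1]; ring_nf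
  -- FTC
  have hFTC := intervalIntegral.integral_eq_sub_of_hasDerivAt_of_tendsto zero_lt_one
    hderiv hfg' hFa hFb
  have hIoo : ∫ x in Set.Ioo (0:ℝ) 1, (f x - g x) = 0 - 1 := by
    rw [← MeasureTheory.integral_Ioc_eq_integral_Ioo,
      ← intervalIntegral.integral_of_le zero_le_one]
    exact hFTC
  refine ⟨hf_int, ?_⟩
  have hsplit : ∫ u in Set.Ioo (0:ℝ) 1, f u
      = (∫ u in Set.Ioo (0:ℝ) 1, (f u - g u)) + ∫ u in Set.Ioo (0:ℝ) 1, g u := by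
    rw [← integral_add hfg hgi]
    congr 1
    funext x
    ring
  have hgv : ∫ u in Set.Ioo (0:ℝ) 1, g u
      = s * (Real.Gamma s * Real.Gamma (1 - α) / Real.Gamma (s + (1 - α))) := by
    rw [← hbv, ← integral_const_mul]
    congr 1
    funext x
    simp [hg_def, mul_assoc]
  rw [hsplit, hIoo, hgv, show s + (1 - α) = s + 1 - α from by ring,
    Real.Gamma_add_one hs.ne']
  ring
end

section
/- For all real 0 < α < 1 and θ ≥ 0, the (α, θ) dislocation density satisfies the regular-variation normalization lim_{ε → 0+} ε^α · ∫_{1/2}^{1−ε} f°_{α,θ}(u) du = 1/Γ(1−α), i.e. ν_{α,θ}([1/2, 1−ε]) ~ ε^{−α}/Γ(1−α) as ε → 0. -/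
open MeasureTheory

/-- The `(α, θ)` dislocation density `f°_{α,θ}` on `(1/2, 1)`, defined by
`Γ(1−α)·f°_{α,θ}(u) = α(u^θ(1−u)^{−α−1} + u^{−α−1}(1−u)^θ)
  + θ(u^{θ−1}(1−u)^{−α} + u^{−α}(1−u)^{θ−1})`. -/
noncomputable def dislocationDensity (α θ : ℝ) (u : ℝ) : ℝ :=
  (α * (u ^ θ * (1 - u) ^ (-α - 1) + u ^ (-α - 1) * (1 - u) ^ θ)
    + θ * (u ^ (θ - 1) * (1 - u) ^ (-α) + u ^ (-α) * (1 - u) ^ (θ - 1)))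
    / Real.Gamma (1 - α)

lemma hasDerivAt_antideriv (α θ : ℝ) {u : ℝ} (hu0 : 0 < u) (hu1 : u < 1) :
    HasDerivAt (fun u : ℝ => (u ^ θ * (1 - u) ^ (-α) - u ^ (-α) * (1 - u) ^ θ)
        / Real.Gamma (1 - α))
      (dislocationDensity α θ u) u := by
  have h1u : (0:ℝ) < 1 - u := by linarith
  have hone : HasDerivAt (fun u : ℝ => 1 - u) (-1) u := by
    simpa using (hasDerivAt_id u).const_sub 1
  have d1 : HasDerivAt (fun u : ℝ => u ^ θ) (θ * u ^ (θ - 1)) u :=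
    Real.hasDerivAt_rpow_const (Or.inl hu0.ne')
  have d2 : HasDerivAt (fun u : ℝ => (1 - u) ^ (-α)) (α * (1 - u) ^ (-α - 1)) u := by
    have := (Real.hasDerivAt_rpow_const (p := -α) (Or.inl h1u.ne')).comp u hone
    simpa [mul_comm, mul_assoc, Function.comp_def] using this
  have d3 : HasDerivAt (fun u : ℝ => u ^ (-α)) (-α * u ^ (-α - 1)) u :=
    Real.hasDerivAt_rpow_const (Or.inl hu0.ne')
  have d4 : HasDerivAt (fun u : ℝ => (1 - u) ^ θ) (-(θ * (1 - u) ^ (θ - 1))) u := by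
    have := (Real.hasDerivAt_rpow_const (p := θ) (Or.inl h1u.ne')).comp u hone
    simpa [mul_comm, Function.comp_def] using this
  have := ((d1.mul d2).sub (d3.mul d4)).div_const (Real.Gamma (1 - α))
  refine this.congr_deriv ?_
  unfold dislocationDensity
  ring

lemma continuousOn_density (α θ : ℝ) {s : Set ℝ} (hs : s ⊆ Set.Ioo 0 1) :
    ContinuousOn (dislocationDensity α θ) s := by
  have hc : ∀ p : ℝ, ContinuousOn (fun u : ℝ => u ^ p) s := fun p x hx =>
    (Real.continuousAt_rpow_const x p (Or.inl (hs hx).1.ne')).continuousWithinAt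
  have hc' : ∀ p : ℝ, ContinuousOn (fun u : ℝ => (1 - u) ^ p) s := by
    intro p
    refine fun x hx => ContinuousAt.continuousWithinAt ?_
    have : (1:ℝ) - x ≠ 0 := by have := (hs hx).2; intro h; linarith
    exact (Real.continuousAt_rpow_const _ p (Or.inl this)).comp (by fun_prop)
  unfold dislocationDensity
  apply ContinuousOn.div_const
  exact (continuousOn_const.mul (((hc θ).mul (hc' (-α-1))).add ((hc (-α-1)).mul (hc' θ)))).add
    (continuousOn_const.mul (((hc (θ-1)).mul (hc' (-α))).add ((hc (-α)).mul (hc' (θ-1)))))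

/-- the regular-variation normalization
`ν_{α,θ}([1/2, 1−ε]) ~ ε^{−α}/Γ(1−α)` as `ε → 0+`, i.e.
`ε^α · ∫_{1/2}^{1−ε} f°_{α,θ}(u) du → 1/Γ(1−α)`. -/
theorem dislocation_measure_normalization (α θ : ℝ) (hα0 : 0 < α) (hα1 : α < 1)
    (hθ : 0 ≤ θ) :
    Filter.Tendsto
      (fun ε : ℝ => ε ^ α * ∫ u in (1 / 2 : ℝ)..(1 - ε), dislocationDensity α θ u)
      (nhdsWithin 0 (Set.Ioi 0)) (nhds (1 / Real.Gamma (1 - α))) := by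
  have hΓ : Real.Gamma (1 - α) ≠ 0 := (Real.Gamma_pos_of_pos (by linarith)).ne'
  have key : ∀ ε : ℝ, 0 < ε → ε < 1 / 2 →
      ε ^ α * ∫ u in (1 / 2 : ℝ)..(1 - ε), dislocationDensity α θ u
        = ((1 - ε) ^ θ - (1 - ε) ^ (-α) * ε ^ (α + θ)) / Real.Gamma (1 - α) := by
    intro ε hε hε2
    have hsub : Set.uIcc (1/2 : ℝ) (1 - ε) ⊆ Set.Ioo 0 1 := by
      rw [Set.uIcc_of_le (by linarith)]
      intro x hx
      exact ⟨by linarith [hx.1], by linarith [hx.2]⟩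
    set F : ℝ → ℝ := fun u => (u ^ θ * (1 - u) ^ (-α) - u ^ (-α) * (1 - u) ^ θ)
        / Real.Gamma (1 - α) with hF
    have hint : ∫ u in (1 / 2 : ℝ)..(1 - ε), dislocationDensity α θ u
        = F (1 - ε) - F (1/2) := by
      refine intervalIntegral.integral_eq_sub_of_hasDerivAt (fun u hu => ?_) ?_
      · exact hasDerivAt_antideriv α θ (hsub hu).1 (hsub hu).2
      · exact (continuousOn_density α θ hsub).intervalIntegrable
    rw [hint, hF]
    simp only
    rw [show (1:ℝ) - (1 - ε) = ε by ring, show (1:ℝ) - 1/2 = 1/2 by norm_num]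
    have h1 : ((1/2:ℝ) ^ θ * (1/2:ℝ) ^ (-α) - (1/2:ℝ) ^ (-α) * (1/2:ℝ) ^ θ) = 0 := by ring
    rw [h1]
    have h2 : ε ^ α * (ε ^ (-α)) = 1 := by
      rw [← Real.rpow_add hε]; simp
    have h3 : ε ^ α * ε ^ θ = ε ^ (α + θ) := (Real.rpow_add hε α θ).symm
    rw [zero_div, sub_zero, ← mul_div_assoc]
    congr 1
    rw [mul_sub, ← mul_assoc, mul_comm (ε ^ α) ((1-ε) ^ θ), mul_assoc, h2, mul_one,
      ← mul_assoc, mul_comm (ε ^ α) ((1-ε) ^ (-α)), mul_assoc, h3]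
  -- the limit
  have hev : (fun ε : ℝ => ε ^ α * ∫ u in (1 / 2 : ℝ)..(1 - ε), dislocationDensity α θ u)
      =ᶠ[nhdsWithin 0 (Set.Ioi 0)]
      fun ε => ((1 - ε) ^ θ - (1 - ε) ^ (-α) * ε ^ (α + θ)) / Real.Gamma (1 - α) := by
    filter_upwards [Ioo_mem_nhdsGT_of_mem (by norm_num : (0:ℝ) ∈ Set.Ico 0 (1/2))]
      with ε hε
    exact key ε hε.1 hε.2
  refine Filter.Tendsto.congr' hev.symm ?_
  have l1 : Filter.Tendsto (fun ε : ℝ => (1 - ε) ^ θ) (nhdsWithin 0 (Set.Ioi 0)) (nhds 1) := by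
    have : ContinuousAt (fun ε : ℝ => (1 - ε) ^ θ) 0 := by
      exact (Real.continuousAt_rpow_const _ θ (Or.inl (by norm_num))).comp (by fun_prop)
    simpa using this.continuousWithinAt.tendsto
  have l2 : Filter.Tendsto (fun ε : ℝ => (1 - ε) ^ (-α)) (nhdsWithin 0 (Set.Ioi 0)) (nhds 1) := by
    have : ContinuousAt (fun ε : ℝ => (1 - ε) ^ (-α)) 0 := by
      exact (Real.continuousAt_rpow_const _ (-α) (Or.inl (by norm_num))).comp (by fun_prop)
    simpa using this.continuousWithinAt.tendsto
  have l3 : Filter.Tendsto (fun ε : ℝ => ε ^ (α + θ)) (nhdsWithin 0 (Set.Ioi 0)) (nhds 0) := by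
    have : ContinuousAt (fun ε : ℝ => ε ^ (α + θ)) 0 :=
      Real.continuousAt_rpow_const 0 (α + θ) (Or.inr (by linarith))
    have h0 : (0:ℝ) ^ (α + θ) = 0 := Real.zero_rpow (by positivity)
    simpa [h0] using this.continuousWithinAt.tendsto
  have := ((l1.sub (l2.mul l3)).div_const (Real.Gamma (1 - α)))
  simpa using this
end
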